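/- arXiv:2406.14998 — 6 statements merged into one kernel-verified Lean document; each statement's English description precedes it below -/
import Mathlib

section
/- Let k > 0 and let R, R_a : ℝ → M₃(ℝ) be differentiable curves with R(t), R_a(t) ∈ SO(3) for all t. Set R_e(t) := R_a(t)ᵀ R(t) and suppose R satisfies the closed-loop attitude control law R′(t) = R(t)·( −k·Log(R_e(t)) + R(t)ᵀ R_a′(t) R_a(t)ᵀ R(t) ) for all t. If tr(R_e(t₀)) ≠ −1 at some time t₀, then tr(R_e(t)) ≠ −1 for all t ≥ t₀ and the rotation-angle error decays exponentially: θ(R_e(t)) = θ(R_e(t₀))·e^{−k(t−t₀)} for all t ≥ t₀; in particular R(t) tracks R_a(t) exponentially fast. -/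
open Matrix Real

/-- `SO3 R` means `R` is a rotation matrix: `Rᵀ R = I` and `det R = 1`. -/
def SO3 (R : Matrix (Fin 3) (Fin 3) ℝ) : Prop := Rᵀ * R = 1 ∧ R.det = 1

/-- The rotation angle `θ(R) = arccos((tr R − 1)/2)` of a rotation matrix. -/
noncomputable def rotAngle (R : Matrix (Fin 3) (Fin 3) ℝ) : ℝ :=
  Real.arccos ((R.trace - 1) / 2)

/-- The principal logarithm on SO(3): `Log I = 0` and
`Log R = (θ/(2 sin θ))·(R − Rᵀ)` for `R ≠ I` with `θ = rotAngle R`. -/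
noncomputable def SO3Log (R : Matrix (Fin 3) (Fin 3) ℝ) : Matrix (Fin 3) (Fin 3) ℝ :=
  if R = 1 then 0 else (rotAngle R / (2 * Real.sin (rotAngle R))) • (R - Rᵀ)

lemma SO3.mul_transpose {A : Matrix (Fin 3) (Fin 3) ℝ} (h : SO3 A) : A * Aᵀ = 1 :=
  mul_eq_one_comm.mp h.1

lemma SO3.adjugate_eq {A : Matrix (Fin 3) (Fin 3) ℝ} (h : SO3 A) : adjugate A = Aᵀ := by
  have h1 : A * adjugate A = 1 := by rw [mul_adjugate, h.2, one_smul]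
  calc adjugate A = (Aᵀ * A) * adjugate A := by rw [h.1, one_mul]
    _ = Aᵀ * (A * adjugate A) := by rw [mul_assoc]
    _ = Aᵀ := by rw [h1, mul_one]

lemma SO3.trace_sq {A : Matrix (Fin 3) (Fin 3) ℝ} (h : SO3 A) :
    (A * A).trace = A.trace ^ 2 - 2 * A.trace := by
  have h2 := congrArg Matrix.trace h.adjugate_eq
  rw [adjugate_fin_three] at h2
  simp only [trace_fin_three, Matrix.mul_apply, Fin.sum_univ_three, transpose_apply,
    Matrix.cons_val', Matrix.cons_val_zero, Matrix.cons_val_one, Matrix.head_cons,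
    Matrix.empty_val', Matrix.cons_val_fin_one, Matrix.head_fin_const,
    Matrix.cons_val_two, Matrix.tail_cons, Matrix.of_apply] at h2 ⊢
  linear_combination (-2 : ℝ) * h2

lemma SO3.trace_mulsq_le {A : Matrix (Fin 3) (Fin 3) ℝ} (h : SO3 A) :
    (A * A).trace ≤ 3 := by
  have e0 := congrFun (congrFun h.1 0) 0
  have e1 := congrFun (congrFun h.1 1) 1
  have e2 := congrFun (congrFun h.1 2) 2
  simp only [Matrix.mul_apply, Fin.sum_univ_three, transpose_apply, Matrix.one_apply_eq] at e0 e1 e2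
  simp only [trace_fin_three, Matrix.mul_apply, Fin.sum_univ_three]
  nlinarith [sq_nonneg (A 0 1 - A 1 0), sq_nonneg (A 0 2 - A 2 0), sq_nonneg (A 1 2 - A 2 1)]

lemma SO3.trace_mem {A : Matrix (Fin 3) (Fin 3) ℝ} (h : SO3 A) :
    -1 ≤ A.trace ∧ A.trace ≤ 3 := by
  have h1 : A.trace ^ 2 - 2 * A.trace ≤ 3 := h.trace_sq ▸ h.trace_mulsq_le
  constructor <;> nlinarith [h1]

lemma trace_one3 : (1 : Matrix (Fin 3) (Fin 3) ℝ).trace = 3 := by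
  simp [Matrix.trace_one]

lemma SO3.cos_rotAngle {A : Matrix (Fin 3) (Fin 3) ℝ} (h : SO3 A) :
    Real.cos (rotAngle A) = (A.trace - 1) / 2 := by
  have := h.trace_mem
  exact Real.cos_arccos (by linarith [this.1]) (by linarith [this.2])

lemma SO3.sin_sq_rotAngle {A : Matrix (Fin 3) (Fin 3) ℝ} (h : SO3 A) :
    Real.sin (rotAngle A) ^ 2 = -(A.trace ^ 2 - 2 * A.trace - 3) / 4 := by
  have hc := h.cos_rotAngle
  have := Real.sin_sq_add_cos_sq (rotAngle A)
  nlinarith [this, hc]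

lemma SO3.trace_mul_log {A : Matrix (Fin 3) (Fin 3) ℝ} (h : SO3 A) :
    (A * SO3Log A).trace = -2 * rotAngle A * Real.sin (rotAngle A) := by
  by_cases h1 : A = 1
  · subst h1
    have : rotAngle (1 : Matrix (Fin 3) (Fin 3) ℝ) = 0 := by
      simp [rotAngle, trace_one3]
      norm_num
    rw [SO3Log, if_pos rfl, Matrix.mul_zero, Matrix.trace_zero, this]
    ring
  · rw [SO3Log, if_neg h1, Matrix.mul_smul, Matrix.trace_smul, Matrix.mul_sub,
      Matrix.trace_sub, h.mul_transpose, trace_one3, h.trace_sq]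
    have hsq := h.sin_sq_rotAngle
    set θ := rotAngle A
    set t := A.trace
    by_cases hs : Real.sin θ = 0
    · rw [hs]
      have : t ^ 2 - 2 * t - 3 = 0 := by nlinarith [hsq, hs]
      simp only [smul_eq_mul]
      rw [show t ^ 2 - 2 * t - (3:ℝ) = 0 by linarith]
      ring
    · simp only [smul_eq_mul]
      rw [show t ^ 2 - 2 * t - (3:ℝ) = -4 * Real.sin θ ^ 2 by linarith]
      rw [div_mul_eq_mul_div, div_eq_iff (mul_ne_zero two_ne_zero hs)]
      ring

/-- Under the control law, the trace of the error matrix has derivative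
`2 k θ sin θ`. -/
lemma trace_deriv (k : ℝ)
    (R Ra R' Ra' : ℝ → Matrix (Fin 3) (Fin 3) ℝ)
    (hRSO3 : ∀ t, SO3 (R t)) (hRaSO3 : ∀ t, SO3 (Ra t))
    (hR : ∀ t, ∀ i j, HasDerivAt (fun s => R s i j) (R' t i j) t)
    (hRa : ∀ t, ∀ i j, HasDerivAt (fun s => Ra s i j) (Ra' t i j) t)
    (Re : ℝ → Matrix (Fin 3) (Fin 3) ℝ) (hRe : ∀ t, Re t = (Ra t)ᵀ * R t)
    (hctrl : ∀ t, R' t =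
      R t * ((-k) • SO3Log (Re t) + (R t)ᵀ * Ra' t * (Ra t)ᵀ * R t)) :
    ∀ t, HasDerivAt (fun s => (Re s).trace)
      (2 * k * rotAngle (Re t) * Real.sin (rotAngle (Re t))) t := by
  intro t
  -- derivative of entries of Re
  have hReSO3 : ∀ s, SO3 (Re s) := by
    intro s
    rw [hRe s]
    constructor
    · rw [Matrix.transpose_mul, Matrix.transpose_transpose, Matrix.mul_assoc,
        ← Matrix.mul_assoc (Ra s), (hRaSO3 s).mul_transpose, Matrix.one_mul, (hRSO3 s).1]
    · rw [Matrix.det_mul, Matrix.det_transpose, (hRaSO3 s).2, (hRSO3 s).2, one_mul]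
  have hent : ∀ i j, HasDerivAt (fun s => Re s i j)
      (((Ra' t)ᵀ * R t + (Ra t)ᵀ * R' t) i j) t := by
    intro i j
    have heq : (fun s => Re s i j) = fun s => ∑ l, Ra s l i * R s l j := by
      funext s
      rw [hRe s]
      simp [Matrix.mul_apply, Matrix.transpose_apply]
    rw [heq]
    have := HasDerivAt.fun_sum (u := Finset.univ)
      (A := fun l s => Ra s l i * R s l j)
      (A' := fun l => Ra' t l i * R t l j + Ra t l i * R' t l j)
      (fun l _ => (hRa t l i).mul (hR t l j))
    refine this.congr_deriv ?_
    simp [Matrix.mul_apply, Matrix.add_apply, Matrix.transpose_apply, Finset.sum_add_distrib]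
  -- trace derivative
  have htr : HasDerivAt (fun s => (Re s).trace)
      (((Ra' t)ᵀ * R t + (Ra t)ᵀ * R' t).trace) t := by
    have heq : (fun s => (Re s).trace) = fun s => ∑ i, Re s i i := by
      funext s; rfl
    rw [heq]
    exact HasDerivAt.fun_sum (fun i _ => hent i i)
  -- skew symmetry of Ra'ᵀ Ra
  have hskew : (Ra' t)ᵀ * Ra t + (Ra t)ᵀ * Ra' t = 0 := by
    ext i j
    have hconst : HasDerivAt (fun s => ∑ l, Ra s l i * Ra s l j) 0 t := by
      have heq : (fun s => ∑ l, Ra s l i * Ra s l j)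
          = fun _ => (1 : Matrix (Fin 3) (Fin 3) ℝ) i j := by
        funext s
        have := congrFun (congrFun (hRaSO3 s).1 i) j
        simpa [Matrix.mul_apply, Matrix.transpose_apply] using this
      rw [heq]
      exact hasDerivAt_const _ _
    have hder : HasDerivAt (fun s => ∑ l, Ra s l i * Ra s l j)
        (∑ l, (Ra' t l i * Ra t l j + Ra t l i * Ra' t l j)) t :=
      HasDerivAt.fun_sum (fun l _ => (hRa t l i).mul (hRa t l j))
    have h0 := hconst.unique hder
    simp only [Matrix.add_apply, Matrix.mul_apply, Matrix.transpose_apply, Matrix.zero_apply]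
    rw [← Finset.sum_add_distrib]
    exact h0.symm
  -- algebraic identity for the derivative value
  have halg : ((Ra' t)ᵀ * R t + (Ra t)ᵀ * R' t).trace
      = 2 * k * rotAngle (Re t) * Real.sin (rotAngle (Re t)) := by
    have hRR : R t * (R t)ᵀ = 1 := (hRSO3 t).mul_transpose
    have hRaRa : Ra t * (Ra t)ᵀ = 1 := (hRaSO3 t).mul_transpose
    have e1 : (Ra' t)ᵀ * R t = ((Ra' t)ᵀ * Ra t) * Re t := by
      rw [hRe t, ← Matrix.mul_assoc, Matrix.mul_assoc ((Ra' t)ᵀ), hRaRa, Matrix.mul_one]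
    have e2 : (Ra t)ᵀ * R' t
        = (-k) • (Re t * SO3Log (Re t)) + ((Ra t)ᵀ * Ra' t) * Re t := by
      rw [hctrl t]
      simp only [Matrix.mul_add, Matrix.mul_smul]
      congr 1
      · rw [← Matrix.mul_assoc, ← hRe t]
      · calc (Ra t)ᵀ * (R t * ((R t)ᵀ * Ra' t * (Ra t)ᵀ * R t))
            = (Ra t)ᵀ * ((R t * (R t)ᵀ) * (Ra' t * ((Ra t)ᵀ * R t))) := by
              simp only [Matrix.mul_assoc]
          _ = (Ra t)ᵀ * (Ra' t * ((Ra t)ᵀ * R t)) := by rw [hRR, Matrix.one_mul]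
          _ = ((Ra t)ᵀ * Ra' t) * Re t := by rw [hRe t, Matrix.mul_assoc]
    rw [e1, e2]
    have h3 : ((Ra' t)ᵀ * Ra t * Re t).trace + ((Ra t)ᵀ * Ra' t * Re t).trace = 0 := by
      rw [← Matrix.trace_add, ← Matrix.add_mul, hskew, Matrix.zero_mul, Matrix.trace_zero]
    rw [← add_assoc, Matrix.trace_add, Matrix.trace_add, Matrix.trace_smul,
      (hReSO3 t).trace_mul_log, smul_eq_mul]
    linear_combination h3
  rw [← halg]
  exact htr

/-- The scalar analysis: if the trace satisfies the ODE `x' = 2 k θ sin θ` and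
stays in `[-1, 3]`, then the angle decays exponentially forward in time. -/
lemma angle_decay (k : ℝ) (hk : 0 < k) (Re : ℝ → Matrix (Fin 3) (Fin 3) ℝ)
    (hx' : ∀ t, HasDerivAt (fun s => (Re s).trace)
      (2 * k * rotAngle (Re t) * Real.sin (rotAngle (Re t))) t)
    (hbd : ∀ t, -1 ≤ (Re t).trace ∧ (Re t).trace ≤ 3)
    (t₀ : ℝ) (h0 : (Re t₀).trace ≠ -1) :
    ∀ t, t₀ ≤ t → (Re t).trace ≠ -1 ∧
      rotAngle (Re t) = rotAngle (Re t₀) * Real.exp (-k * (t - t₀)) := by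
  set x : ℝ → ℝ := fun s => (Re s).trace with hxdef
  set θf : ℝ → ℝ := fun s => rotAngle (Re s) with hθdef
  have hθx : ∀ s, θf s = Real.arccos ((x s - 1) / 2) := fun s => rfl
  have hθmem : ∀ s, 0 ≤ θf s ∧ θf s ≤ π := fun s =>
    ⟨Real.arccos_nonneg _, Real.arccos_le_pi _⟩
  have hD0 : ∀ t, 0 ≤ 2 * k * θf t * Real.sin (θf t) := by
    intro t
    have hs : 0 ≤ Real.sin (θf t) :=
      Real.sin_nonneg_of_nonneg_of_le_pi (hθmem t).1 (hθmem t).2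
    have := (hθmem t).1
    positivity
  have hdiff : Differentiable ℝ x := fun t => (hx' t).differentiableAt
  have hmono : Monotone x := by
    apply monotone_of_deriv_nonneg hdiff
    intro t
    rw [(hx' t).deriv]
    exact hD0 t
  have hgt : ∀ t, t₀ ≤ t → -1 < x t := by
    intro t ht
    have h1 : -1 < x t₀ := lt_of_le_of_ne (hbd t₀).1 (Ne.symm h0)
    exact lt_of_lt_of_le h1 (hmono ht)
  -- the constancy lemma
  have hconst : ∀ t, t₀ ≤ t → (∀ s, t₀ ≤ s → s ≤ t → x s < 3) →
      θf t = θf t₀ * Real.exp (-k * (t - t₀)) := by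
    intro t ht hlt3
    have hder : ∀ s, t₀ ≤ s → s ≤ t →
        HasDerivAt (fun r => θf r * Real.exp (k * (r - t₀))) 0 s := by
      intro s hs1 hs2
      have hxs3 : x s < 3 := hlt3 s hs1 hs2
      have hxs1 : -1 < x s := hgt s hs1
      set u : ℝ → ℝ := fun r => (x r - 1) / 2 with hudef
      have hu1 : u s ≠ -1 := by simp only [hudef]; intro h; rw [div_eq_iff (by norm_num : (2:ℝ) ≠ 0)] at h; linarith
      have hu2 : u s ≠ 1 := by simp only [hudef]; intro h; rw [div_eq_iff (by norm_num : (2:ℝ) ≠ 0)] at h; linarith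
      have huu : -1 < u s ∧ u s < 1 := by constructor <;> [skip; skip] <;> simp only [hudef] <;> [linarith; linarith]
      have hsqrt_pos : 0 < Real.sqrt (1 - u s ^ 2) := by
        apply Real.sqrt_pos.mpr; nlinarith [huu.1, huu.2]
      have hud : HasDerivAt u (k * θf s * Real.sin (θf s)) s := by
        have := ((hx' s).sub_const 1).div_const 2
        refine this.congr_deriv ?_
        ring
      have hθd : HasDerivAt θf (-(k * θf s)) s := by
        have harc := (Real.hasDerivAt_arccos hu1 hu2).comp s hud
        have heq : (Real.arccos ∘ u) = θf := by
          funext r; simp [hθx, hudef, Function.comp]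
        rw [heq] at harc
        refine harc.congr_deriv ?_
        have hsin : Real.sin (θf s) = Real.sqrt (1 - u s ^ 2) := by
          rw [hθx]; exact Real.sin_arccos _
        rw [hsin]
        field_simp
      have hexp : HasDerivAt (fun r => Real.exp (k * (r - t₀)))
          (k * Real.exp (k * (s - t₀))) s := by
        have h1 : HasDerivAt (fun r : ℝ => k * (r - t₀)) k s := by
          simpa using ((hasDerivAt_id s).sub_const t₀).const_mul k
        have := (Real.hasDerivAt_exp (k * (s - t₀))).comp s h1
        refine this.congr_deriv ?_
        ring
      have := hθd.mul hexp
      refine this.congr_deriv ?_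
      ring
    have key := constant_of_has_deriv_right_zero
      (f := fun r => θf r * Real.exp (k * (r - t₀))) (a := t₀) (b := t)
      (fun s hs => ((hder s hs.1 hs.2).continuousAt).continuousWithinAt)
      (fun s hs => ((hder s hs.1 (le_of_lt hs.2)).hasDerivWithinAt))
    have h2 := key t (Set.right_mem_Icc.mpr ht)
    simp only [sub_self, mul_zero, Real.exp_zero, mul_one] at h2
    have hexp_ne : Real.exp (k * (t - t₀)) ≠ 0 := Real.exp_ne_zero _
    rw [show -k * (t - t₀) = -(k * (t - t₀)) by ring, Real.exp_neg]
    field_simp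
    linarith [h2]
  -- the set where x = 3 is empty beyond t₀, or x t₀ = 3
  by_cases hcase : x t₀ = 3
  · -- Case A
    intro t ht
    have hx3 : x t = 3 := le_antisymm (hbd t).2 (hcase ▸ hmono ht)
    have hθ0 : θf t = 0 := by rw [hθx, hx3]; norm_num [Real.arccos_one]
    have hθ0' : θf t₀ = 0 := by rw [hθx, hcase]; norm_num [Real.arccos_one]
    refine ⟨by rw [show (Re t).trace = x t from rfl, hx3]; norm_num, ?_⟩
    rw [show rotAngle (Re t) = θf t from rfl, show rotAngle (Re t₀) = θf t₀ from rfl,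
      hθ0, hθ0']
    ring
  · -- Case B
    have hx03 : x t₀ < 3 := lt_of_le_of_ne (hbd t₀).2 hcase
    have hθ0pos : 0 < θf t₀ := by
      rw [hθx]; apply Real.arccos_pos.mpr; linarith
    have hS : {s | t₀ ≤ s ∧ x s = 3} = ∅ := by
      by_contra hne
      rw [← Ne, ← Set.nonempty_iff_ne_empty] at hne
      have hclosed : IsClosed {s | t₀ ≤ s ∧ x s = 3} := by
        have : {s | t₀ ≤ s ∧ x s = 3} = Set.Ici t₀ ∩ x ⁻¹' {3} := by
          ext s; simp [Set.mem_Ici]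
        rw [this]
        exact isClosed_Ici.inter (isClosed_singleton.preimage hdiff.continuous)
      have hbdd : BddBelow {s | t₀ ≤ s ∧ x s = 3} := ⟨t₀, fun s hs => hs.1⟩
      set T := sInf {s | t₀ ≤ s ∧ x s = 3} with hTdef
      have hTmem : T ∈ {s | t₀ ≤ s ∧ x s = 3} := hclosed.csInf_mem hne hbdd
      have hT0 : t₀ < T := by
        rcases lt_or_eq_of_le hTmem.1 with h | h
        · exact h
        · exfalso; rw [← h] at hTmem; exact hcase hTmem.2
      have hlt : ∀ s, t₀ ≤ s → s < T → x s < 3 := by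
        intro s hs1 hs2
        rcases lt_or_eq_of_le (hbd s).2 with h | h
        · exact h
        · exfalso
          have : T ≤ s := csInf_le hbdd ⟨hs1, h⟩
          linarith
      have hval : ∀ s, s ∈ Set.Ioo t₀ T →
          θf s - θf t₀ * Real.exp (-k * (s - t₀)) = 0 := by
        intro s hs
        rw [hconst s (le_of_lt hs.1) (fun r hr1 hr2 => hlt r hr1 (lt_of_le_of_lt hr2 hs.2))]
        ring
      set F : ℝ → ℝ := fun s => θf s - θf t₀ * Real.exp (-k * (s - t₀)) with hFdef
      have hFcont : Continuous F := by
        have hcx : Continuous fun s => (x s - 1) / 2 :=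
          (hdiff.continuous.sub continuous_const).div_const 2
        have hc1 : Continuous θf := by
          have : θf = fun s => Real.arccos ((x s - 1) / 2) := funext hθx
          rw [this]
          exact Real.continuous_arccos.comp hcx
        have hc2 : Continuous fun s : ℝ => Real.exp (-k * (s - t₀)) :=
          Real.continuous_exp.comp (continuous_const.mul (continuous_id.sub continuous_const))
        exact hc1.sub (continuous_const.mul hc2)
      have h1 : Filter.Tendsto F (nhdsWithin T (Set.Iio T)) (nhds (F T)) :=
        hFcont.continuousAt.continuousWithinAt.tendsto
      have h2 : F =ᶠ[nhdsWithin T (Set.Iio T)] (fun _ => 0) := by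
        apply Filter.eventuallyEq_of_mem (Ioo_mem_nhdsLT_of_mem ⟨hT0, le_refl T⟩)
        intro s hs
        exact hval s hs
      have h3 : Filter.Tendsto (fun _ : ℝ => (0:ℝ)) (nhdsWithin T (Set.Iio T)) (nhds (F T)) :=
        h1.congr' h2
      have h4 : F T = 0 := tendsto_nhds_unique h3 tendsto_const_nhds
      have hθT : θf T = 0 := by rw [hθx, hTmem.2]; norm_num [Real.arccos_one]
      rw [hFdef] at h4
      simp only [hθT] at h4
      have := Real.exp_pos (-k * (T - t₀))
      nlinarith [h4, hθ0pos, this]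
    intro t ht
    refine ⟨(hgt t ht).ne', ?_⟩
    apply hconst t ht
    intro s hs1 hs2
    rcases lt_or_eq_of_le (hbd s).2 with h | h
    · exact h
    · exfalso
      have : s ∈ {r | t₀ ≤ r ∧ x r = 3} := ⟨hs1, h⟩
      rw [hS] at this
      exact this

/-- Exponential tracking of a time-varying attitude target under the geometric
control law `Ω = −k Log(R_e) + Ad_{R_eᵀ}(Ω_a)`: if `tr(R_e(t₀)) ≠ −1`, then
`tr(R_e(t)) ≠ −1` for all `t ≥ t₀` and
`θ(R_e(t)) = θ(R_e(t₀)) e^{−k(t−t₀)}`. -/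
theorem stmt2 (k : ℝ) (hk : 0 < k)
    (R Ra R' Ra' : ℝ → Matrix (Fin 3) (Fin 3) ℝ)
    (hRSO3 : ∀ t, SO3 (R t)) (hRaSO3 : ∀ t, SO3 (Ra t))
    (hR : ∀ t, ∀ i j, HasDerivAt (fun s => R s i j) (R' t i j) t)
    (hRa : ∀ t, ∀ i j, HasDerivAt (fun s => Ra s i j) (Ra' t i j) t)
    (Re : ℝ → Matrix (Fin 3) (Fin 3) ℝ) (hRe : ∀ t, Re t = (Ra t)ᵀ * R t)
    (hctrl : ∀ t, R' t =
      R t * ((-k) • SO3Log (Re t) + (R t)ᵀ * Ra' t * (Ra t)ᵀ * R t))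
    (t₀ : ℝ) (h0 : (Re t₀).trace ≠ -1) :
    ∀ t, t₀ ≤ t → (Re t).trace ≠ -1 ∧
      rotAngle (Re t) = rotAngle (Re t₀) * Real.exp (-k * (t - t₀)) := by
  have hReSO3 : ∀ s, SO3 (Re s) := by
    intro s
    rw [hRe s]
    constructor
    · rw [Matrix.transpose_mul, Matrix.transpose_transpose, Matrix.mul_assoc,
        ← Matrix.mul_assoc (Ra s), (hRaSO3 s).mul_transpose, Matrix.one_mul, (hRSO3 s).1]
    · rw [Matrix.det_mul, Matrix.det_transpose, (hRaSO3 s).2, (hRSO3 s).2, one_mul]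
  exact angle_decay k hk Re
    (trace_deriv k R Ra R' Ra' hRSO3 hRaSO3 hR hRa Re hRe hctrl)
    (fun t => (hReSO3 t).trace_mem) t₀ h0
end

section
/- Let R_e : ℝ → M₃(ℝ) be a differentiable curve with R_e(t) ∈ SO(3) and tr(R_e(t)) ≠ −1 for all t, and write R_e′(t) = R_e(t)·Ω_e(t), where Ω_e(t) := R_e(t)ᵀ R_e′(t) is skew-symmetric. Then the squared geodesic distance to the identity, t ↦ ‖Log(R_e(t))‖_F², is differentiable and its derivative equals 2·tr( Log(R_e(t))ᵀ · Ω_e(t) ). -/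
open Matrix Real

/-- The squared Frobenius norm `‖A‖_F² = tr(Aᵀ A)`. -/
noncomputable def fnormSq (A : Matrix (Fin 3) (Fin 3) ℝ) : ℝ := (Aᵀ * A).trace

lemma fnormSq_eq_sum (A : Matrix (Fin 3) (Fin 3) ℝ) :
    fnormSq A = ∑ j : Fin 3, ∑ k : Fin 3, (A k j)^2 := by
  simp [fnormSq, Matrix.trace, Matrix.diag, Matrix.mul_apply, Matrix.transpose_apply, sq]

lemma fnormSq_nonneg (A : Matrix (Fin 3) (Fin 3) ℝ) : 0 ≤ fnormSq A := by
  rw [fnormSq_eq_sum]; positivity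

lemma fnormSq_eq_zero_iff (A : Matrix (Fin 3) (Fin 3) ℝ) : fnormSq A = 0 ↔ A = 0 := by
  rw [fnormSq_eq_sum]
  constructor
  · intro h
    ext k j
    have h1 := (Finset.sum_eq_zero_iff_of_nonneg (fun j _ => by positivity)).mp h j (Finset.mem_univ j)
    have h2 := (Finset.sum_eq_zero_iff_of_nonneg (fun k _ => by positivity)).mp h1 k (Finset.mem_univ k)
    simpa using pow_eq_zero_iff (n := 2) (by norm_num) |>.mp h2
  · intro h; simp [h]

lemma fnormSq_smul (c : ℝ) (A : Matrix (Fin 3) (Fin 3) ℝ) :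
    fnormSq (c • A) = c^2 * fnormSq A := by
  simp [fnormSq_eq_sum, Matrix.smul_apply, smul_eq_mul, mul_pow, Finset.mul_sum]

lemma so3_trace_mul_self {R : Matrix (Fin 3) (Fin 3) ℝ} (h : SO3 R) :
    (R * R).trace = R.trace ^ 2 - 2 * R.trace := by
  have hadj : adjugate R = Rᵀ := by
    calc adjugate R = (Rᵀ * R) * adjugate R := by rw [h.1, one_mul]
    _ = Rᵀ * (R * adjugate R) := by rw [Matrix.mul_assoc]
    _ = Rᵀ := by rw [Matrix.mul_adjugate, h.2, one_smul, mul_one]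
  have key : (adjugate R).trace = (R.trace ^ 2 - (R * R).trace) / 2 := by
    rw [adjugate_fin_three]
    simp [Matrix.trace_fin_three, Matrix.mul_apply, Fin.sum_univ_three]
    ring
  rw [hadj, Matrix.trace_transpose] at key
  linarith

lemma so3_sub_transpose {R : Matrix (Fin 3) (Fin 3) ℝ} (h : SO3 R) :
    fnormSq (R - Rᵀ) = 2 * ((3 - R.trace) * (1 + R.trace)) := by
  have hinv : R * Rᵀ = 1 := mul_eq_one_comm.mp h.1
  have e1 : fnormSq (R - Rᵀ) =
      (Rᵀ * R).trace - (Rᵀ * Rᵀ).trace - ((R * R).trace - (R * Rᵀ).trace) := by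
    rw [fnormSq, Matrix.transpose_sub, Matrix.transpose_transpose, Matrix.sub_mul,
      Matrix.mul_sub, Matrix.mul_sub, Matrix.trace_sub, Matrix.trace_sub, Matrix.trace_sub]
  have e2 : (Rᵀ * Rᵀ).trace = (R * R).trace := by
    rw [← Matrix.transpose_mul, Matrix.trace_transpose]
  rw [e1, e2, h.1, hinv, trace_one3, so3_trace_mul_self h]
  ring

lemma so3_trace_le {R : Matrix (Fin 3) (Fin 3) ℝ} (h : Rᵀ * R = 1) : R.trace ≤ 3 := by
  have e1 : fnormSq (1 - R) = 6 - 2 * R.trace := by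
    rw [fnormSq, Matrix.transpose_sub, Matrix.transpose_one, Matrix.sub_mul,
      Matrix.mul_sub, Matrix.mul_sub, h]
    simp [Matrix.trace_sub, trace_one3, Matrix.trace_transpose]
    ring
  have := fnormSq_nonneg (1 - R)
  linarith

lemma so3_trace_eq_three_iff {R : Matrix (Fin 3) (Fin 3) ℝ} (h : Rᵀ * R = 1) :
    R.trace = 3 ↔ R = 1 := by
  have e1 : fnormSq (1 - R) = 6 - 2 * R.trace := by
    rw [fnormSq, Matrix.transpose_sub, Matrix.transpose_one, Matrix.sub_mul,
      Matrix.mul_sub, Matrix.mul_sub, h]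
    simp [Matrix.trace_sub, trace_one3, Matrix.trace_transpose]
    ring
  constructor
  · intro h3
    have : fnormSq (1 - R) = 0 := by rw [e1, h3]; ring
    have := (fnormSq_eq_zero_iff _).mp this
    have : (1 : Matrix (Fin 3) (Fin 3) ℝ) - R = 0 := this
    have hR : R = 1 := by
      have := sub_eq_zero.mp this
      exact this.symm
    exact hR
  · intro h1; rw [h1, trace_one3]

lemma so3_trace_gt {R : Matrix (Fin 3) (Fin 3) ℝ} (h : SO3 R) (hne : R.trace ≠ -1) :
    -1 < R.trace := by
  have h1 : 0 ≤ (3 - R.trace) * (1 + R.trace) := by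
    have := fnormSq_nonneg (R - Rᵀ)
    rw [so3_sub_transpose h] at this
    linarith
  have h2 := so3_trace_le h.1
  rcases eq_or_lt_of_le h2 with h3 | h3
  · linarith
  · have h4 : 0 ≤ 1 + R.trace := nonneg_of_mul_nonneg_right h1 (by linarith)
    rcases eq_or_lt_of_le h4 with h5 | h5
    · exact absurd h5.symm (by intro hh; exact hne (by linarith))
    · linarith

lemma fnormSq_log {R : Matrix (Fin 3) (Fin 3) ℝ} (h : SO3 R) (hne : R.trace ≠ -1) :
    fnormSq (SO3Log R) = 2 * (arccos ((R.trace - 1) / 2)) ^ 2 := by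
  by_cases h1 : R = 1
  · rw [h1, SO3Log, if_pos rfl, trace_one3]
    norm_num [fnormSq, Real.arccos_one]
  · rw [SO3Log, if_neg h1]
    have hlt : R.trace < 3 := lt_of_le_of_ne (so3_trace_le h.1)
      (fun hh => h1 ((so3_trace_eq_three_iff h.1).mp hh))
    have hgt : -1 < R.trace := so3_trace_gt h hne
    set u : ℝ := (R.trace - 1) / 2 with hu
    have hu1 : u < 1 := by rw [hu]; linarith
    have hu2 : -1 < u := by rw [hu]; linarith
    have hθpos : 0 < arccos u := Real.arccos_pos.mpr hu1
    have hθlt : arccos u < π := by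
      rcases lt_or_eq_of_le (Real.arccos_le_pi u) with h' | h'
      · exact h'
      · exfalso
        have := Real.cos_arccos hu2.le hu1.le
        rw [h', Real.cos_pi] at this
        linarith
    have hspos : 0 < Real.sin (arccos u) := Real.sin_pos_of_pos_of_lt_pi hθpos hθlt
    have hsin2 : Real.sin (arccos u) ^ 2 = 1 - u ^ 2 := by
      have hc := Real.cos_arccos hu2.le hu1.le
      nlinarith [Real.sin_sq_add_cos_sq (arccos u)]
    have hrot : rotAngle R = arccos u := rfl
    rw [fnormSq_smul, so3_sub_transpose h, hrot]
    have hfact : (3 - R.trace) * (1 + R.trace) = 4 * Real.sin (arccos u) ^ 2 := by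
      rw [hsin2, hu]; ring
    rw [hfact]
    field_simp
    ring

lemma arccos_sq_bound {x : ℝ} (h1 : -1 ≤ x) (h2 : x ≤ 1) :
    2 * arccos x ^ 2 ≤ π ^ 2 * (1 - x) := by
  have habs : |arccos x| ≤ π := by
    rw [abs_of_nonneg (Real.arccos_nonneg x)]; exact Real.arccos_le_pi x
  have hb := Real.cos_le_one_sub_mul_cos_sq habs
  rw [Real.cos_arccos h1 h2] at hb
  have hπ : (0:ℝ) < π ^ 2 := by positivity
  have h4 := mul_le_mul_of_nonneg_left hb hπ.le
  have h5 : π ^ 2 * (1 - 2 / π ^ 2 * arccos x ^ 2) = π ^ 2 - 2 * arccos x ^ 2 := by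
    field_simp
  rw [h5] at h4
  nlinarith [h4]


/-- Along a differentiable curve `R_e` in SO(3) with `tr(R_e(t)) ≠ −1` and
`R_e′ = R_e Ω_e`, the squared geodesic distance to the identity
`t ↦ ‖Log(R_e(t))‖_F²` is differentiable with derivative
`2 tr(Log(R_e(t))ᵀ Ω_e(t))`. -/
theorem stmt3 (Re Re' : ℝ → Matrix (Fin 3) (Fin 3) ℝ)
    (hSO3 : ∀ t, SO3 (Re t)) (htr : ∀ t, (Re t).trace ≠ -1)
    (hderiv : ∀ t, ∀ i j, HasDerivAt (fun s => Re s i j) (Re' t i j) t)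
    (Ωe : ℝ → Matrix (Fin 3) (Fin 3) ℝ) (hΩe : ∀ t, Ωe t = (Re t)ᵀ * Re' t) :
    ∀ t, HasDerivAt (fun s => fnormSq (SO3Log (Re s)))
      (2 * ((SO3Log (Re t))ᵀ * Ωe t).trace) t := by
  intro t
  have hrep : (fun s => fnormSq (SO3Log (Re s)))
      = (fun x => 2 * arccos x ^ 2) ∘ (fun s => ((Re s).trace - 1) / 2) := by
    funext s
    exact fnormSq_log (hSO3 s) (htr s)
  have htrd : HasDerivAt (fun s => (Re s).trace) ((Re' t).trace) t := by
    have h := HasDerivAt.fun_sum (fun i (_ : i ∈ (Finset.univ : Finset (Fin 3))) => hderiv t i i)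
    simpa [Matrix.trace, Matrix.diag] using h
  have hu : HasDerivAt (fun s => ((Re s).trace - 1) / 2) ((Re' t).trace / 2) t :=
    (htrd.sub_const 1).div_const 2
  have hskew : (Re' t)ᵀ * Re t + (Re t)ᵀ * Re' t = 0 := by
    ext i j
    have h1 : HasDerivAt (fun s => ∑ k, Re s k i * Re s k j)
        (∑ k, (Re' t k i * Re t k j + Re t k i * Re' t k j)) t :=
      HasDerivAt.fun_sum fun k _ => (hderiv t k i).mul (hderiv t k j)
    have h2 : (fun s => ∑ k, Re s k i * Re s k j)
        = (fun _ : ℝ => (1 : Matrix (Fin 3) (Fin 3) ℝ) i j) := by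
      funext s
      have h3 := congrFun (congrFun (hSO3 s).1 i) j
      simpa [Matrix.mul_apply, Matrix.transpose_apply] using h3
    rw [h2] at h1
    have h0 := (hasDerivAt_const t ((1 : Matrix (Fin 3) (Fin 3) ℝ) i j)).unique h1
    simp only [Matrix.add_apply, Matrix.mul_apply, Matrix.transpose_apply, Matrix.zero_apply]
    rw [← Finset.sum_add_distrib]
    exact h0.symm
  have hRRT : Re t * (Re t)ᵀ = 1 := mul_eq_one_comm.mp (hSO3 t).1
  have htr1 : (Re t * Ωe t).trace = (Re' t).trace := by
    rw [hΩe, ← Matrix.mul_assoc, hRRT, Matrix.one_mul]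
  have hΩT : (Ωe t)ᵀ = -(Ωe t) := by
    rw [hΩe, Matrix.transpose_mul, Matrix.transpose_transpose]
    exact eq_neg_of_add_eq_zero_left hskew
  have htr2 : ((Re t)ᵀ * Ωe t).trace = -(Re' t).trace := by
    calc ((Re t)ᵀ * Ωe t).trace = (((Re t)ᵀ * Ωe t)ᵀ).trace := (Matrix.trace_transpose _).symm
    _ = ((Ωe t)ᵀ * ((Re t)ᵀ)ᵀ).trace := by rw [Matrix.transpose_mul]
    _ = -((Ωe t) * Re t).trace := by
        rw [hΩT, Matrix.transpose_transpose, Matrix.neg_mul, Matrix.trace_neg]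
    _ = -(Re t * Ωe t).trace := by rw [Matrix.trace_mul_comm]
    _ = -(Re' t).trace := by rw [htr1]
  by_cases hR1 : Re t = 1
  · -- boundary case : Re t = 1
    have hlog0 : SO3Log (Re t) = 0 := by rw [SO3Log, if_pos hR1]
    have hval : 2 * ((SO3Log (Re t))ᵀ * Ωe t).trace = 0 := by
      rw [hlog0]; simp
    rw [hval, hrep]
    have hut : ((Re t).trace - 1) / 2 = 1 := by rw [hR1, trace_one3]; norm_num
    have hub : ∀ s, ((Re s).trace - 1) / 2 ≤ 1 := fun s => by
      have := so3_trace_le (hSO3 s).1; linarith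
    have hlb : ∀ s, -1 ≤ ((Re s).trace - 1) / 2 := fun s => by
      have := so3_trace_gt (hSO3 s) (htr s); linarith
    have hmax : IsLocalMax (fun s => ((Re s).trace - 1) / 2) t :=
      Filter.Eventually.of_forall (fun s => by simpa [hut] using hub s)
    have hd0 : (Re' t).trace / 2 = 0 := hmax.hasDerivAt_eq_zero hu
    have hG : HasDerivAt (fun s => π ^ 2 * (1 - ((Re s).trace - 1) / 2)) 0 t := by
      have h := (hu.const_sub 1).const_mul (π ^ 2)
      simpa [hd0] using h
    rw [hasDerivAt_iff_tendsto_slope]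
    have hGs := hasDerivAt_iff_tendsto_slope.mp hG
    have hGs' : Filter.Tendsto
        (fun s => |slope (fun s => π ^ 2 * (1 - ((Re s).trace - 1) / 2)) t s|)
        (nhdsWithin t {t}ᶜ) (nhds 0) := by
      simpa using hGs.abs
    apply squeeze_zero_norm _ hGs'
    intro s
    rw [Real.norm_eq_abs, slope_def_field, slope_def_field]
    have hFt : (((fun x => 2 * arccos x ^ 2) ∘ fun s => ((Re s).trace - 1) / 2)) t = 0 := by
      simp [Function.comp, hut, Real.arccos_one]
    have hGt : π ^ 2 * (1 - ((Re t).trace - 1) / 2) = 0 := by rw [hut]; ring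
    rw [hFt, hGt, sub_zero, sub_zero, abs_div, abs_div]
    have hF0 : 0 ≤ ((fun x => 2 * arccos x ^ 2) ∘ fun s => ((Re s).trace - 1) / 2) s := by
      simp only [Function.comp]; positivity
    have hG0 : 0 ≤ π ^ 2 * (1 - ((Re s).trace - 1) / 2) := by
      have := hub s; nlinarith [sq_nonneg π]
    rw [abs_of_nonneg hF0, abs_of_nonneg hG0]
    have hnum : ((fun x => 2 * arccos x ^ 2) ∘ fun s => ((Re s).trace - 1) / 2) s
        ≤ π ^ 2 * (1 - ((Re s).trace - 1) / 2) :=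
      arccos_sq_bound (hlb s) (hub s)
    exact div_le_div_of_nonneg_right hnum (abs_nonneg (s - t))
  · -- interior case
    have hτlt : (Re t).trace < 3 := lt_of_le_of_ne (so3_trace_le (hSO3 t).1)
      (fun hh => hR1 ((so3_trace_eq_three_iff (hSO3 t).1).mp hh))
    have hτgt := so3_trace_gt (hSO3 t) (htr t)
    set u0 : ℝ := ((Re t).trace - 1) / 2 with hu0
    have hu1 : u0 < 1 := by rw [hu0]; linarith
    have hu2 : -1 < u0 := by rw [hu0]; linarith
    have harc : HasDerivAt arccos (-(1 / Real.sqrt (1 - u0 ^ 2))) u0 :=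
      Real.hasDerivAt_arccos hu2.ne' hu1.ne
    have hg : HasDerivAt (fun x => 2 * arccos x ^ 2)
        (2 * (2 * arccos u0 ^ 1 * -(1 / Real.sqrt (1 - u0 ^ 2)))) u0 :=
      (harc.pow 2).const_mul 2
    have hcomp := hg.comp t hu
    rw [hrep]
    refine HasDerivAt.congr_deriv hcomp ?_
    have hrot : rotAngle (Re t) = arccos u0 := rfl
    have hlogΩ : ((SO3Log (Re t))ᵀ * Ωe t).trace
        = (arccos u0 / (2 * Real.sin (arccos u0))) * (-(2 * (Re' t).trace)) := by
      rw [SO3Log, if_neg hR1, hrot]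
      rw [Matrix.transpose_smul, Matrix.smul_mul, Matrix.trace_smul, Matrix.transpose_sub,
        Matrix.transpose_transpose, Matrix.sub_mul, Matrix.trace_sub, htr2, htr1]
      rw [smul_eq_mul]; ring
    rw [hlogΩ]
    have hsin : Real.sin (arccos u0) = Real.sqrt (1 - u0 ^ 2) := Real.sin_arccos u0
    have hpos : 0 < Real.sqrt (1 - u0 ^ 2) := Real.sqrt_pos.mpr (by nlinarith)
    rw [hsin]
    field_simp
end

section
/- Let R, R_a ∈ SO(3) and let x := R e₁ and m_d := R_a e₁ be their first columns (so x, m_d are unit vectors). Then the angle δ := arccos(xᵀ m_d) between the first columns is at most the rotation angle of the attitude error matrix: arccos(xᵀ m_d) ≤ arccos((tr(R_aᵀ R) − 1)/2); equivalently cos δ ≥ cos θ(R_aᵀ R). -/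
open Matrix Real

lemma aux_nonneg (p s : ℝ) (h : p * (4 - p) = s) (hs : 0 ≤ s) : 0 ≤ p := by
  nlinarith [sq_nonneg p]

/-- The angle between the first columns `x = R e₁` and `m_d = R_a e₁` of two
rotation matrices is at most the rotation angle of the attitude error matrix:
`arccos(xᵀ m_d) ≤ θ(R_aᵀ R)`; equivalently `cos δ ≥ cos θ(R_aᵀ R)`. -/
theorem stmt11 (R Ra : Matrix (Fin 3) (Fin 3) ℝ) (hR : SO3 R) (hRa : SO3 Ra)
    (x md : Fin 3 → ℝ) (hx : x = R.mulVec ![1, 0, 0])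
    (hmd : md = Ra.mulVec ![1, 0, 0]) :
    Real.arccos (x ⬝ᵥ md) ≤ rotAngle (Raᵀ * R) ∧
    Real.cos (Real.arccos (x ⬝ᵥ md)) ≥ Real.cos (rotAngle (Raᵀ * R)) := by
  obtain ⟨hR1, hR2⟩ := hR
  obtain ⟨hRa1, hRa2⟩ := hRa
  set E := Raᵀ * R with hE
  have hRo : R * Rᵀ = 1 := mul_eq_one_comm.mp hR1
  have hRao : Ra * Raᵀ = 1 := mul_eq_one_comm.mp hRa1
  have hE1 : Eᵀ * E = 1 := by
    calc Eᵀ * E = Rᵀ * (Ra * Raᵀ) * R := by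
          simp [hE, Matrix.transpose_mul, Matrix.mul_assoc]
    _ = 1 := by rw [hRao]; simp [hR1]
  have hE2 : E * Eᵀ = 1 := by
    calc E * Eᵀ = Raᵀ * (R * Rᵀ) * Ra := by
          simp [hE, Matrix.transpose_mul, Matrix.mul_assoc]
    _ = 1 := by rw [hRo]; simp [hRa1]
  have hEd : E.det = 1 := by
    simp [hE, Matrix.det_mul, Matrix.det_transpose, hR2, hRa2]
  -- entries
  set a := E 0 0; set b := E 0 1; set c := E 0 2
  set d := E 1 0; set e := E 1 1; set f := E 1 2
  set g := E 2 0; set h := E 2 1; set i := E 2 2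
  have hc1 : a*a + d*d + g*g = 1 := by
    have := congrFun (congrFun hE1 0) 0
    simpa [Matrix.mul_apply, Matrix.transpose_apply, Fin.sum_univ_three,
      Matrix.one_apply] using this
  have hc2 : b*b + e*e + h*h = 1 := by
    have := congrFun (congrFun hE1 1) 1
    simpa [Matrix.mul_apply, Matrix.transpose_apply, Fin.sum_univ_three,
      Matrix.one_apply] using this
  have hc3 : c*c + f*f + i*i = 1 := by
    have := congrFun (congrFun hE1 2) 2
    simpa [Matrix.mul_apply, Matrix.transpose_apply, Fin.sum_univ_three,
      Matrix.one_apply] using this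
  have hr1 : a*a + b*b + c*c = 1 := by
    have := congrFun (congrFun hE2 0) 0
    simpa [Matrix.mul_apply, Matrix.transpose_apply, Fin.sum_univ_three,
      Matrix.one_apply] using this
  have hr2 : d*d + e*e + f*f = 1 := by
    have := congrFun (congrFun hE2 1) 1
    simpa [Matrix.mul_apply, Matrix.transpose_apply, Fin.sum_univ_three,
      Matrix.one_apply] using this
  have hr3 : g*g + h*h + i*i = 1 := by
    have := congrFun (congrFun hE2 2) 2
    simpa [Matrix.mul_apply, Matrix.transpose_apply, Fin.sum_univ_three,
      Matrix.one_apply] using this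
  have hr4 : a*d + b*e + c*f = 0 := by
    have := congrFun (congrFun hE2 0) 1
    simpa [Matrix.mul_apply, Matrix.transpose_apply, Fin.sum_univ_three,
      Matrix.one_apply] using this
  have hr5 : a*g + b*h + c*i = 0 := by
    have := congrFun (congrFun hE2 0) 2
    simpa [Matrix.mul_apply, Matrix.transpose_apply, Fin.sum_univ_three,
      Matrix.one_apply] using this
  have hr6 : d*g + e*h + f*i = 0 := by
    have := congrFun (congrFun hE2 1) 2
    simpa [Matrix.mul_apply, Matrix.transpose_apply, Fin.sum_univ_three,
      Matrix.one_apply] using this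
  have hdet : a*(e*i) - a*(f*h) - b*(d*i) + b*(f*g) + c*(d*h) - c*(e*g) = 1 := by
    have := Matrix.det_fin_three E
    rw [hEd] at this
    linarith [this]
  have hdot : x ⬝ᵥ md = a := by
    subst hx hmd
    show _ = E 0 0
    simp [hE, dotProduct, Matrix.mulVec, Matrix.mul_apply,
      Matrix.transpose_apply, Fin.sum_univ_three]
    ring
  have htr : E.trace = a + e + i := by
    simp [Matrix.trace_fin_three]
    rfl
  clear_value a b c d e f g h i
  -- cofactor identities: rows form a right-handed orthonormal frame
  have key0 : (e*i - f*h - a)^2 + (f*g - d*i - b)^2 + (d*h - e*g - c)^2 = 0 := by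
    linear_combination (g*g + h*h + i*i) * hr2 + hr3 - (d*g + e*h + f*i) * hr6
      - 2 * hdet + hr1
  have key1 : (h*c - i*b - d)^2 + (i*a - g*c - e)^2 + (g*b - h*a - f)^2 = 0 := by
    linear_combination (a*a + b*b + c*c) * hr3 + hr1 - (a*g + b*h + c*i) * hr5
      - 2 * hdet + hr2
  have key2 : (b*f - c*e - g)^2 + (c*d - a*f - h)^2 + (a*e - b*d - i)^2 = 0 := by
    linear_combination (d*d + e*e + f*f) * hr1 + hr2 - (a*d + b*e + c*f) * hr4
      - 2 * hdet + hr3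
  have hA : e*i - f*h = a := by
    have h1 : (e*i - f*h - a)^2 = 0 :=
      le_antisymm (by linarith [key0, sq_nonneg (f*g - d*i - b), sq_nonneg (d*h - e*g - c)])
        (sq_nonneg _)
    have := sq_eq_zero_iff.mp h1
    linarith
  have hEe : i*a - g*c = e := by
    have h1 : (i*a - g*c - e)^2 = 0 :=
      le_antisymm (by linarith [key1, sq_nonneg (h*c - i*b - d), sq_nonneg (g*b - h*a - f)])
        (sq_nonneg _)
    have := sq_eq_zero_iff.mp h1
    linarith
  have hI : a*e - b*d = i := by
    have h1 : (a*e - b*d - i)^2 = 0 :=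
      le_antisymm (by linarith [key2, sq_nonneg (b*f - c*e - g), sq_nonneg (c*d - a*f - h)])
        (sq_nonneg _)
    have := sq_eq_zero_iff.mp h1
    linarith
  -- quaternion-square identities
  have hPQ1 : (1+a+e+i)*(1+a-e-i) = (h-f)^2 := by
    linear_combination hr1 - hc2 - hc3 - 2*hA
  have hPQ2 : (1+a+e+i)*(1-a+e-i) = (c-g)^2 := by
    linear_combination hr2 - hc1 - hc3 - 2*hEe
  have hPQ3 : (1+a+e+i)*(1-a-e+i) = (d-b)^2 := by
    linear_combination hc3 - hr1 - hr2 - 2*hI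
  have hQ12 : (1+a-e-i)*(1-a+e-i) = (b+d)^2 := by
    linear_combination hc3 - hr1 - hr2 + 2*hI
  have hQ13 : (1+a-e-i)*(1-a-e+i) = (c+g)^2 := by
    linear_combination hr2 - hc1 - hc3 + 2*hEe
  have hp : 0 ≤ 1 + a + e + i := by
    refine aux_nonneg _ ((h-f)^2 + (c-g)^2 + (d-b)^2) ?_ (by positivity)
    linear_combination hPQ1 + hPQ2 + hPQ3
  have hq1 : 0 ≤ 1 + a - e - i := by
    refine aux_nonneg _ ((h-f)^2 + (b+d)^2 + (c+g)^2) ?_ (by positivity)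
    linear_combination hPQ1 + hQ12 + hQ13
  have ha1 : a ≤ 1 := by linarith [hc1, sq_nonneg (a-1), sq_nonneg d, sq_nonneg g, sq_nonneg a]
  have ha2 : -1 ≤ a := by linarith [hc1, sq_nonneg (a+1), sq_nonneg d, sq_nonneg g, sq_nonneg a]
  have hs1 : -1 ≤ (E.trace - 1) / 2 := by rw [htr]; linarith
  have hs2 : (E.trace - 1) / 2 ≤ a := by rw [htr]; linarith
  rw [rotAngle, hdot]
  constructor
  · rw [Real.arccos_eq_pi_div_two_sub_arcsin, Real.arccos_eq_pi_div_two_sub_arcsin]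
    have := Real.monotone_arcsin hs2
    linarith
  · rw [Real.cos_arccos ha2 ha1, Real.cos_arccos hs1 (le_trans hs2 ha1)]
    exact hs2
end

section
/- (Triangle inequality for the rotation angle) For all P, Q ∈ SO(3), the rotation angle of the product is at most the sum of the rotation angles: arccos((tr(P Q) − 1)/2) ≤ arccos((tr P − 1)/2) + arccos((tr Q − 1)/2). Equivalently, for attitude errors R_e^i, R_e^j ∈ SO(3), ‖Log((R_e^j)ᵀ R_e^i)‖_F ≤ ‖Log(R_e^i)‖_F + ‖Log(R_e^j)‖_F whenever the logarithms are defined. -/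
open Matrix Real

/-! ### Auxiliary lemmas -/

/-- Cayley–Hamilton for 3×3 real matrices, stated explicitly. -/
theorem aux_CH3 (A : Matrix (Fin 3) (Fin 3) ℝ) :
    A * A * A - A.trace • (A * A) + (adjugate A).trace • A
      - A.det • (1 : Matrix (Fin 3) (Fin 3) ℝ) = 0 := by
  ext i j
  simp [Matrix.mul_apply, Fin.sum_univ_three, Matrix.trace_fin_three, Matrix.det_fin_three,
    Matrix.adjugate_fin_three, Matrix.one_apply]
  fin_cases i <;> fin_cases j <;> simp <;> ring

/-- Expansion of `det (x • 1 + A)` for 3×3 matrices. -/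
theorem aux_detXI (A : Matrix (Fin 3) (Fin 3) ℝ) (x : ℝ) :
    (x • (1 : Matrix (Fin 3) (Fin 3) ℝ) + A).det
      = x ^ 3 + A.trace * x ^ 2 + (adjugate A).trace * x + A.det := by
  simp [Matrix.det_fin_three, Matrix.trace_fin_three, Matrix.adjugate_fin_three,
    Matrix.one_apply]
  ring

theorem so3_mul_transpose {R : Matrix (Fin 3) (Fin 3) ℝ} (h : SO3 R) : R * Rᵀ = 1 :=
  mul_eq_one_comm.mpr h.1

theorem so3_transpose {R : Matrix (Fin 3) (Fin 3) ℝ} (h : SO3 R) : SO3 Rᵀ :=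
  ⟨by rw [Matrix.transpose_transpose]; exact so3_mul_transpose h,
   by rw [Matrix.det_transpose]; exact h.2⟩

theorem so3_mul {P Q : Matrix (Fin 3) (Fin 3) ℝ} (hP : SO3 P) (hQ : SO3 Q) : SO3 (P * Q) := by
  constructor
  · rw [Matrix.transpose_mul]
    calc Qᵀ * Pᵀ * (P * Q) = Qᵀ * (Pᵀ * P) * Q := by
          rw [mul_assoc, ← mul_assoc Pᵀ P Q, ← mul_assoc]
      _ = 1 := by rw [hP.1, mul_one, hQ.1]
  · rw [Matrix.det_mul, hP.2, hQ.2, one_mul]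

theorem so3_adjugate {R : Matrix (Fin 3) (Fin 3) ℝ} (h : SO3 R) : adjugate R = Rᵀ := by
  have h1 : R * adjugate R = 1 := by rw [Matrix.mul_adjugate, h.2, one_smul]
  calc adjugate R = (Rᵀ * R) * adjugate R := by rw [h.1, one_mul]
    _ = Rᵀ * (R * adjugate R) := by rw [mul_assoc]
    _ = Rᵀ := by rw [h1, mul_one]

theorem so3_sq {R : Matrix (Fin 3) (Fin 3) ℝ} (h : SO3 R) :
    R * R = R.trace • R - R.trace • (1 : Matrix (Fin 3) (Fin 3) ℝ) + Rᵀ := by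
  have hch := aux_CH3 R
  rw [so3_adjugate h, Matrix.trace_transpose, h.2, one_smul] at hch
  have h2 := congrArg (fun X => Rᵀ * X) hch
  simp only [Matrix.mul_add, Matrix.mul_sub, mul_smul_comm, ← mul_assoc, h.1, one_mul,
    mul_one, Matrix.mul_zero] at h2
  have h3 : R * R - R.trace • R + R.trace • (1 : Matrix (Fin 3) (Fin 3) ℝ) - Rᵀ = 0 := h2
  linear_combination (norm := abel) h3

theorem so3_col {R : Matrix (Fin 3) (Fin 3) ℝ} (h : SO3 R) (i : Fin 3) :
    R 0 i ^ 2 + R 1 i ^ 2 + R 2 i ^ 2 = 1 := by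
  have := congrFun (congrFun h.1 i) i
  simpa [Matrix.mul_apply, Fin.sum_univ_three, Matrix.one_apply, sq] using this

theorem aux_le_one {a b c : ℝ} (h : a ^ 2 + b ^ 2 + c ^ 2 = 1) : a ≤ 1 := by
  nlinarith [sq_nonneg b, sq_nonneg c, sq_nonneg (a - 1)]

theorem aux_zero {a b c : ℝ} (h : a ^ 2 + b ^ 2 + c ^ 2 = 1) (ha : a = 1) : b = 0 ∧ c = 0 := by
  constructor <;> nlinarith [sq_nonneg b, sq_nonneg c]

theorem so3_trace_le_three {R : Matrix (Fin 3) (Fin 3) ℝ} (h : SO3 R) : R.trace ≤ 3 := by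
  have l0 := aux_le_one (so3_col h 0)
  have l1 : R 1 1 ≤ 1 := by
    have h1 := so3_col h 1
    nlinarith [sq_nonneg (R 0 1), sq_nonneg (R 2 1), sq_nonneg (R 1 1 - 1)]
  have l2 : R 2 2 ≤ 1 := by
    have h2 := so3_col h 2
    nlinarith [sq_nonneg (R 0 2), sq_nonneg (R 1 2), sq_nonneg (R 2 2 - 1)]
  rw [Matrix.trace_fin_three]; linarith

theorem so3_eq_one_of_trace {R : Matrix (Fin 3) (Fin 3) ℝ} (h : SO3 R) (ht : R.trace = 3) :
    R = 1 := by
  have h0 := so3_col h 0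
  have h1 := so3_col h 1
  have h2 := so3_col h 2
  have l0 := aux_le_one h0
  have l1 : R 1 1 ≤ 1 := by nlinarith [sq_nonneg (R 0 1), sq_nonneg (R 2 1), sq_nonneg (R 1 1 - 1)]
  have l2 : R 2 2 ≤ 1 := by nlinarith [sq_nonneg (R 0 2), sq_nonneg (R 1 2), sq_nonneg (R 2 2 - 1)]
  rw [Matrix.trace_fin_three] at ht
  have d0 : R 0 0 = 1 := by linarith
  have d1 : R 1 1 = 1 := by linarith
  have d2 : R 2 2 = 1 := by linarith
  have z0 := aux_zero h0 d0
  have z1 := aux_zero (by linarith [h1] : R 1 1 ^ 2 + R 0 1 ^ 2 + R 2 1 ^ 2 = 1) d1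
  have z2 := aux_zero (by linarith [h2] : R 2 2 ^ 2 + R 0 2 ^ 2 + R 1 2 ^ 2 = 1) d2
  ext i j
  fin_cases i <;> fin_cases j <;>
    first
      | exact d0 | exact d1 | exact d2
      | simpa using z0.1 | simpa using z0.2
      | simpa using z1.1 | simpa using z1.2
      | simpa using z2.1 | simpa using z2.2

theorem dp_self_nonneg (v : Fin 3 → ℝ) : 0 ≤ v ⬝ᵥ v :=
  Finset.sum_nonneg fun i _ => mul_self_nonneg (v i)

theorem dp_self_pos {v : Fin 3 → ℝ} (hv : v ≠ 0) : 0 < v ⬝ᵥ v :=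
  (dp_self_nonneg v).lt_of_ne fun e => hv (dotProduct_self_eq_zero.mp e.symm)

theorem dp_transpose (R : Matrix (Fin 3) (Fin 3) ℝ) (w : Fin 3 → ℝ) :
    w ⬝ᵥ Rᵀ *ᵥ w = w ⬝ᵥ R *ᵥ w := by
  rw [Matrix.dotProduct_mulVec, Matrix.vecMul_transpose, dotProduct_comm]

theorem so3_dp_mulVec {R : Matrix (Fin 3) (Fin 3) ℝ} (h : SO3 R) (v : Fin 3 → ℝ) :
    (R *ᵥ v) ⬝ᵥ (R *ᵥ v) = v ⬝ᵥ v := by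
  rw [Matrix.dotProduct_mulVec, ← Matrix.mulVec_transpose, Matrix.mulVec_mulVec, h.1,
    Matrix.one_mulVec]

theorem so3_trace_ge_neg_one {R : Matrix (Fin 3) (Fin 3) ℝ} (h : SO3 R) : -1 ≤ R.trace := by
  by_contra hlt
  push_neg at hlt
  set t := R.trace with htdef
  have hD : (0:ℝ) ≤ (1 - t)^2 - 4 := by nlinarith
  set s := Real.sqrt ((1 - t)^2 - 4) with hsdef
  have hs2 : s^2 = (1 - t)^2 - 4 := Real.sq_sqrt hD
  have hs0 : 0 ≤ s := Real.sqrt_nonneg _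
  set x0 : ℝ := ((1 - t) + s) / 2 with hx0
  have hx1 : 1 < x0 := by
    rw [hx0]; nlinarith
  have hroot : x0^2 + (t - 1) * x0 + 1 = 0 := by
    rw [hx0]; field_simp; nlinarith [hs2]
  have hdet : (x0 • (1 : Matrix (Fin 3) (Fin 3) ℝ) + R).det = 0 := by
    rw [aux_detXI, so3_adjugate h, Matrix.trace_transpose, h.2, ← htdef]
    linear_combination (x0 + 1) * hroot
  obtain ⟨v, hv0, hv⟩ := (Matrix.exists_mulVec_eq_zero_iff).mpr hdet
  have hRv : R *ᵥ v = -(x0 • v) := by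
    have h2 : x0 • v + R *ᵥ v = 0 := by
      rw [Matrix.add_mulVec, Matrix.smul_mulVec, Matrix.one_mulVec] at hv
      exact hv
    linear_combination (norm := module) h2
  have hnorm := so3_dp_mulVec h v
  rw [hRv] at hnorm
  have : x0 ^ 2 * (v ⬝ᵥ v) = v ⬝ᵥ v := by
    rw [dotProduct_neg, neg_dotProduct, neg_neg,
      smul_dotProduct, dotProduct_smul, smul_eq_mul, smul_eq_mul] at hnorm
    nlinarith [hnorm]
  have hvp := dp_self_pos hv0
  have hx2 : 1 < x0 ^ 2 := by nlinarith
  nlinarith [mul_lt_mul_of_pos_right hx2 hvp]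

theorem so3_Msq {R : Matrix (Fin 3) (Fin 3) ℝ} (h : SO3 R) :
    (R + Rᵀ - (R.trace - 1) • 1) * (R + Rᵀ - (R.trace - 1) • 1)
      = (3 - R.trace) • (R + Rᵀ - (R.trace - 1) • 1) := by
  have h1 := so3_sq h
  have h2 := so3_sq (so3_transpose h)
  rw [Matrix.transpose_transpose, Matrix.trace_transpose] at h2
  have hRT := so3_mul_transpose h
  have hTR := h.1
  simp only [Matrix.add_mul, Matrix.sub_mul, Matrix.mul_add, Matrix.mul_sub,
    smul_mul_assoc, mul_smul_comm, one_mul, mul_one, h1, h2, hRT, hTR,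
    smul_smul, smul_sub, smul_add]
  module

theorem M_transpose (R : Matrix (Fin 3) (Fin 3) ℝ) :
    (R + Rᵀ - (R.trace - 1) • 1)ᵀ = R + Rᵀ - (R.trace - 1) • 1 := by
  simp [Matrix.transpose_add, Matrix.transpose_sub, Matrix.transpose_smul, add_comm]

theorem dp_M (R : Matrix (Fin 3) (Fin 3) ℝ) (w : Fin 3 → ℝ) :
    w ⬝ᵥ (R + Rᵀ - (R.trace - 1) • 1) *ᵥ w
      = 2 * (w ⬝ᵥ R *ᵥ w) - (R.trace - 1) * (w ⬝ᵥ w) := by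
  rw [Matrix.sub_mulVec, Matrix.add_mulVec, Matrix.smul_mulVec, Matrix.one_mulVec,
    dotProduct_sub, dotProduct_add, dp_transpose, dotProduct_smul]
  simp only [smul_eq_mul]
  ring

theorem so3_dp_M_nonneg {R : Matrix (Fin 3) (Fin 3) ℝ} (h : SO3 R) (w : Fin 3 → ℝ) :
    0 ≤ w ⬝ᵥ (R + Rᵀ - (R.trace - 1) • 1) *ᵥ w := by
  set M := R + Rᵀ - (R.trace - 1) • 1 with hM
  have hsym : Mᵀ = M := M_transpose R
  have key : (M *ᵥ w) ⬝ᵥ (M *ᵥ w) = (3 - R.trace) * (w ⬝ᵥ M *ᵥ w) := by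
    rw [Matrix.dotProduct_mulVec, ← Matrix.mulVec_transpose, Matrix.mulVec_mulVec, hsym,
      so3_Msq h, Matrix.smul_mulVec, smul_dotProduct, dotProduct_comm,
      ← hM, smul_eq_mul]
  rcases lt_or_eq_of_le (so3_trace_le_three h) with ht | ht
  · nlinarith [dp_self_nonneg (M *ᵥ w)]
  · have h0 : (M *ᵥ w) ⬝ᵥ (M *ᵥ w) = 0 := by rw [key, ht]; ring
    have : M *ᵥ w = 0 := dotProduct_self_eq_zero.mp h0
    rw [this, dotProduct_zero]

theorem so3_dp_lower {R : Matrix (Fin 3) (Fin 3) ℝ} (h : SO3 R) (w : Fin 3 → ℝ) :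
    (R.trace - 1) * (w ⬝ᵥ w) ≤ 2 * (w ⬝ᵥ R *ᵥ w) := by
  have := so3_dp_M_nonneg h w
  rw [dp_M] at this
  linarith

theorem so3_exists_extremal {R : Matrix (Fin 3) (Fin 3) ℝ} (h : SO3 R) :
    ∃ w : Fin 3 → ℝ, w ≠ 0 ∧ 2 * (w ⬝ᵥ R *ᵥ w) = (R.trace - 1) * (w ⬝ᵥ w) := by
  set M := R + Rᵀ - (R.trace - 1) • 1 with hM
  have hdet : M.det = 0 := by
    have hdd : M.det * M.det = (3 - R.trace) ^ 3 * M.det := by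
      rw [← Matrix.det_mul, so3_Msq h, Matrix.det_smul]
      simp [Fintype.card_fin]
      exact Or.inl rfl
    by_contra hne
    have hcube : M.det = (3 - R.trace) ^ 3 := by
      exact mul_right_cancel₀ hne hdd
    rcases lt_or_eq_of_le (so3_trace_le_three h) with ht | ht
    · have hu : IsUnit M.det := by
        rw [hcube]; exact (isUnit_iff_ne_zero).mpr (pow_ne_zero _ (ne_of_gt (by linarith)))
      have hMeq : M = (3 - R.trace) • (1 : Matrix (Fin 3) (Fin 3) ℝ) := by
        have h2 := so3_Msq h
        calc M = (M⁻¹ * M) * M := by rw [Matrix.nonsing_inv_mul M hu, one_mul]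
          _ = M⁻¹ * (M * M) := by rw [mul_assoc]
          _ = M⁻¹ * ((3 - R.trace) • M) := by rw [h2]
          _ = (3 - R.trace) • (M⁻¹ * M) := by rw [mul_smul_comm]
          _ = (3 - R.trace) • 1 := by rw [Matrix.nonsing_inv_mul M hu]
      have htr := congrArg Matrix.trace hMeq
      rw [hM] at htr
      simp [Matrix.trace_add, Matrix.trace_sub, Matrix.trace_smul, Matrix.trace_one,
        Matrix.trace_transpose] at htr
      have : R.trace = 3 := by linarith [htr]
      linarith
    · rw [← ht] at hcube
      simp at hcube
      exact hne hcube
  obtain ⟨v, hv0, hv⟩ := (Matrix.exists_mulVec_eq_zero_iff).mpr hdet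
  refine ⟨v, hv0, ?_⟩
  have h0 : v ⬝ᵥ M *ᵥ v = 0 := by rw [hv, dotProduct_zero]
  rw [dp_M] at h0
  linarith

theorem my_arccos_le_arccos {x y : ℝ} (h : x ≤ y) : Real.arccos y ≤ Real.arccos x := by
  rw [Real.arccos_eq_pi_div_two_sub_arcsin, Real.arccos_eq_pi_div_two_sub_arcsin]
  linarith [Real.monotone_arcsin h]

theorem neg_le_of_sq_le_sq' {b c : ℝ} (h : b ^ 2 ≤ c ^ 2) (hc : 0 ≤ c) : -c ≤ b := by
  nlinarith

theorem dp_cauchy (x y : Fin 3 → ℝ) : (x ⬝ᵥ y) ^ 2 ≤ (x ⬝ᵥ x) * (y ⬝ᵥ y) := by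
  simp only [dotProduct, Fin.sum_univ_three]
  nlinarith [sq_nonneg (x 0 * y 1 - x 1 * y 0), sq_nonneg (x 0 * y 2 - x 2 * y 0),
    sq_nonneg (x 1 * y 2 - x 2 * y 1)]

/-- Spherical triangle inequality in cosine form. -/
theorem spherical (x y z : Fin 3 → ℝ) (r : ℝ) (hr : 0 < r)
    (hx : x ⬝ᵥ x = r) (hy : y ⬝ᵥ y = r) (hz : z ⬝ᵥ z = r) :
    r * Real.cos (Real.arccos ((x ⬝ᵥ y) / r) + Real.arccos ((y ⬝ᵥ z) / r)) ≤ x ⬝ᵥ z := by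
  set α := (x ⬝ᵥ y) / r with hα
  set β := (y ⬝ᵥ z) / r with hβ
  have hxy : x ⬝ᵥ y = α * r := by rw [hα]; field_simp
  have hyz : y ⬝ᵥ z = β * r := by rw [hβ]; field_simp
  have hyx : y ⬝ᵥ x = α * r := by rw [dotProduct_comm]; exact hxy
  have hxy2 : (x ⬝ᵥ y) ^ 2 ≤ r ^ 2 := by have := dp_cauchy x y; rw [hx, hy] at this; nlinarith
  have hyz2 : (y ⬝ᵥ z) ^ 2 ≤ r ^ 2 := by have := dp_cauchy y z; rw [hy, hz] at this; nlinarith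
  have hα1 : α ^ 2 ≤ 1 := by
    rw [hα, div_pow, div_le_one (by positivity)]; exact hxy2
  have hβ1 : β ^ 2 ≤ 1 := by
    rw [hβ, div_pow, div_le_one (by positivity)]; exact hyz2
  have hαl : -1 ≤ α := by nlinarith
  have hαu : α ≤ 1 := by nlinarith
  have hβl : -1 ≤ β := by nlinarith
  have hβu : β ≤ 1 := by nlinarith
  rw [Real.cos_add, Real.cos_arccos hαl hαu, Real.cos_arccos hβl hβu,
    Real.sin_arccos, Real.sin_arccos]
  have hx'x' : (x - α • y) ⬝ᵥ (x - α • y) = r * (1 - α ^ 2) := by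
    simp only [sub_dotProduct, dotProduct_sub, smul_dotProduct,
      dotProduct_smul, smul_eq_mul, hx, hy, hxy, hyx]
    ring
  have hz'z' : (z - β • y) ⬝ᵥ (z - β • y) = r * (1 - β ^ 2) := by
    have hzy : z ⬝ᵥ y = β * r := by rw [dotProduct_comm]; exact hyz
    simp only [sub_dotProduct, dotProduct_sub, smul_dotProduct,
      dotProduct_smul, smul_eq_mul, hz, hy, hyz, hzy]
    ring
  have hx'z' : (x - α • y) ⬝ᵥ (z - β • y) = x ⬝ᵥ z - α * β * r := by
    simp only [sub_dotProduct, dotProduct_sub, smul_dotProduct,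
      dotProduct_smul, smul_eq_mul, hy, hxy, hyz]
    ring
  have hcs := dp_cauchy (x - α • y) (z - β • y)
  rw [hx'x', hz'z', hx'z'] at hcs
  set u := Real.sqrt (1 - α ^ 2) with hu
  set w := Real.sqrt (1 - β ^ 2) with hw
  have hu0 : 0 ≤ u := Real.sqrt_nonneg _
  have hw0 : 0 ≤ w := Real.sqrt_nonneg _
  have hu2 : u ^ 2 = 1 - α ^ 2 := Real.sq_sqrt (by nlinarith)
  have hw2 : w ^ 2 = 1 - β ^ 2 := Real.sq_sqrt (by nlinarith)
  set b := x ⬝ᵥ z - α * β * r with hb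
  have hc0 : 0 ≤ r * u * w := by positivity
  have hrw : (r * u * w) ^ 2 = (r * (1 - α ^ 2)) * (r * (1 - β ^ 2)) := by
    rw [mul_pow, mul_pow, hu2, hw2]; ring
  have hbc : b ^ 2 ≤ (r * u * w) ^ 2 := by rw [hrw]; exact hcs
  have hkey : -(r * u * w) ≤ b := neg_le_of_sq_le_sq' hbc hc0
  have h2 : x ⬝ᵥ z = b + α * β * r := by rw [hb]; ring
  have h3 : r * (α * β - u * w) = α * β * r - r * u * w := by ring
  rw [h2, h3]
  linarith

/-- The Frobenius norm `‖A‖_F = √(tr(Aᵀ A))`. -/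
noncomputable def fnorm (A : Matrix (Fin 3) (Fin 3) ℝ) : ℝ :=
  Real.sqrt ((Aᵀ * A).trace)

theorem part1 (P Q : Matrix (Fin 3) (Fin 3) ℝ) (hP : SO3 P) (hQ : SO3 Q) :
    rotAngle (P * Q) ≤ rotAngle P + rotAngle Q := by
  have hPQ := so3_mul hP hQ
  by_cases hπ : π ≤ rotAngle P + rotAngle Q
  · exact le_trans (Real.arccos_le_pi _) hπ
  push_neg at hπ
  obtain ⟨w, hw0, hw⟩ := so3_exists_extremal hPQ
  set r := w ⬝ᵥ w with hr
  have hrpos : 0 < r := dp_self_pos hw0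
  set y := Q *ᵥ w with hy
  set z := (P * Q) *ᵥ w with hz
  have hyy : y ⬝ᵥ y = r := so3_dp_mulVec hQ w
  have hzz : z ⬝ᵥ z = r := so3_dp_mulVec hPQ w
  have hzy : z = P *ᵥ y := by rw [hy, hz, Matrix.mulVec_mulVec]
  have hQc : (Q.trace - 1) / 2 ≤ (w ⬝ᵥ y) / r := by
    rw [div_le_div_iff₀ two_pos hrpos]
    have := so3_dp_lower hQ w
    rw [← hy] at this; linarith
  have hPc : (P.trace - 1) / 2 ≤ (y ⬝ᵥ z) / r := by
    rw [div_le_div_iff₀ two_pos hrpos]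
    have := so3_dp_lower hP y
    rw [← hzy] at this; rw [← hyy]; linarith
  have hPQc : (w ⬝ᵥ z) / r = ((P * Q).trace - 1) / 2 := by
    rw [div_eq_div_iff (ne_of_gt hrpos) (two_ne_zero)]
    linarith
  have hφQ : Real.arccos ((w ⬝ᵥ y) / r) ≤ rotAngle Q := my_arccos_le_arccos hQc
  have hφP : Real.arccos ((y ⬝ᵥ z) / r) ≤ rotAngle P := my_arccos_le_arccos hPc
  have hsph := spherical w y z r hrpos hr.symm hyy hzz
  set φ1 := Real.arccos ((w ⬝ᵥ y) / r)
  set φ2 := Real.arccos ((y ⬝ᵥ z) / r)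
  have hsum0 : 0 ≤ φ1 + φ2 := by
    have := Real.arccos_nonneg ((w ⬝ᵥ y) / r); have := Real.arccos_nonneg ((y ⬝ᵥ z) / r)
    linarith
  have hmono : Real.cos (rotAngle P + rotAngle Q) ≤ Real.cos (φ1 + φ2) :=
    Real.cos_le_cos_of_nonneg_of_le_pi hsum0 (le_of_lt hπ) (by linarith)
  have hc3 : Real.cos (rotAngle P + rotAngle Q) ≤ ((P * Q).trace - 1) / 2 := by
    have h1 : r * Real.cos (φ1 + φ2) ≤ w ⬝ᵥ z := hsph
    have h2 : w ⬝ᵥ z = r * (((P * Q).trace - 1) / 2) := by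
      field_simp at hPQc ⊢; linarith
    rw [h2] at h1
    have := mul_le_mul_of_nonneg_left hmono (le_of_lt hrpos)
    have h3 : r * Real.cos (rotAngle P + rotAngle Q) ≤ r * (((P * Q).trace - 1) / 2) :=
      le_trans this h1
    exact le_of_mul_le_mul_left h3 hrpos
  have hsum1 : 0 ≤ rotAngle P + rotAngle Q := by
    have := Real.arccos_nonneg ((P.trace - 1) / 2)
    have := Real.arccos_nonneg ((Q.trace - 1) / 2)
    unfold rotAngle; linarith
  calc rotAngle (P * Q) = Real.arccos (((P * Q).trace - 1) / 2) := rfl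
    _ ≤ Real.arccos (Real.cos (rotAngle P + rotAngle Q)) := my_arccos_le_arccos hc3
    _ = rotAngle P + rotAngle Q := Real.arccos_cos hsum1 (le_of_lt hπ)

theorem fnorm_log {R : Matrix (Fin 3) (Fin 3) ℝ} (h : SO3 R) (ht : R.trace ≠ -1) :
    fnorm (SO3Log R) = Real.sqrt 2 * rotAngle R := by
  by_cases h1 : R = 1
  · subst h1
    rw [SO3Log, if_pos rfl, fnorm]
    have ht1 : (1 : Matrix (Fin 3) (Fin 3) ℝ).trace = 3 := by
      simp [Matrix.trace_one]
    rw [rotAngle, ht1]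
    norm_num
  · set t := R.trace with htdef
    have hle := so3_trace_le_three h
    have hge := so3_trace_ge_neg_one h
    have hne3 : t ≠ 3 := fun e => h1 (so3_eq_one_of_trace h e)
    have hlt3 : t < 3 := lt_of_le_of_ne hle hne3
    have hgt : -1 < t := lt_of_le_of_ne hge (Ne.symm ht)
    set c : ℝ := (t - 1) / 2 with hc
    have hc1 : -1 < c := by rw [hc]; linarith
    have hc2 : c < 1 := by rw [hc]; linarith
    set θ := rotAngle R with hθ
    have hθc : θ = Real.arccos c := rfl
    have hθpos : 0 < θ := by rw [hθc]; exact Real.arccos_pos.mpr hc2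
    have hθltπ : θ < π := by
      rcases lt_or_eq_of_le (Real.arccos_le_pi c) with hh | hh
      · rw [hθc]; exact hh
      · exfalso; have := Real.arccos_eq_pi.mp hh; linarith
    have hsin : 0 < Real.sin θ := Real.sin_pos_of_pos_of_lt_pi hθpos hθltπ
    have hcos : Real.cos θ = c := Real.cos_arccos (le_of_lt hc1) (le_of_lt hc2)
    have hsin2 : Real.sin θ ^ 2 = 1 - c ^ 2 := by
      have := Real.sin_sq_add_cos_sq θ
      rw [hcos] at this; linarith
    have htr2 : (R * R).trace = t ^ 2 - 2 * t := by
      rw [so3_sq h, Matrix.trace_add, Matrix.trace_sub, Matrix.trace_smul, Matrix.trace_smul,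
        Matrix.trace_one, Matrix.trace_transpose, ← htdef]
      simp only [Fintype.card_fin, smul_eq_mul, Nat.cast_ofNat]
      ring
    set A := R - Rᵀ with hA
    have hAt : Aᵀ = Rᵀ - R := by rw [hA, Matrix.transpose_sub, Matrix.transpose_transpose]
    have htrA : (Aᵀ * A).trace = 8 * Real.sin θ ^ 2 := by
      have expand : Aᵀ * A = Rᵀ * R + R * Rᵀ - Rᵀ * Rᵀ - R * R := by
        rw [hAt, hA]
        simp only [Matrix.sub_mul, Matrix.mul_sub]
        abel
      rw [expand, h.1, so3_mul_transpose h]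
      have e2 : (Rᵀ * Rᵀ).trace = (R * R).trace := by
        rw [← Matrix.transpose_mul, Matrix.trace_transpose]
      rw [Matrix.trace_sub, Matrix.trace_sub, Matrix.trace_add, e2, htr2, Matrix.trace_one]
      rw [hsin2, hc]
      simp only [Fintype.card_fin, Nat.cast_ofNat]
      ring
    rw [SO3Log, if_neg h1, fnorm, ← hθ, ← hA]
    rw [Matrix.transpose_smul, Matrix.smul_mul, Matrix.mul_smul, smul_smul, Matrix.trace_smul,
      htrA, smul_eq_mul]
    have hval : θ / (2 * Real.sin θ) * (θ / (2 * Real.sin θ)) * (8 * Real.sin θ ^ 2)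
        = 2 * θ ^ 2 := by
      field_simp; ring
    rw [hval]
    rw [Real.sqrt_mul (by norm_num : (0:ℝ) ≤ 2), Real.sqrt_sq (le_of_lt hθpos)]

/-- Triangle inequality for the rotation angle: for all `P, Q ∈ SO(3)`,
`θ(P Q) ≤ θ(P) + θ(Q)`; equivalently, for attitude errors `R_e^i, R_e^j ∈ SO(3)`,
`‖Log((R_e^j)ᵀ R_e^i)‖_F ≤ ‖Log(R_e^i)‖_F + ‖Log(R_e^j)‖_F` whenever the
logarithms are defined. -/
theorem stmt15 :
    (∀ P Q : Matrix (Fin 3) (Fin 3) ℝ, SO3 P → SO3 Q →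
      rotAngle (P * Q) ≤ rotAngle P + rotAngle Q) ∧
    (∀ Rei Rej : Matrix (Fin 3) (Fin 3) ℝ, SO3 Rei → SO3 Rej →
      Rei.trace ≠ -1 → Rej.trace ≠ -1 → (Rejᵀ * Rei).trace ≠ -1 →
      fnorm (SO3Log (Rejᵀ * Rei)) ≤ fnorm (SO3Log Rei) + fnorm (SO3Log Rej)) := by
  constructor
  · exact part1
  · intro Rei Rej hi hj hti htj htij
    have hjT : SO3 Rejᵀ := so3_transpose hj
    have hprod : SO3 (Rejᵀ * Rei) := so3_mul hjT hi
    have h1 : rotAngle (Rejᵀ * Rei) ≤ rotAngle Rejᵀ + rotAngle Rei := part1 _ _ hjT hi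
    have hT : rotAngle Rejᵀ = rotAngle Rej := by
      rw [rotAngle, rotAngle, Matrix.trace_transpose]
    rw [hT] at h1
    rw [fnorm_log hprod htij, fnorm_log hi hti, fnorm_log hj htj]
    have hs : (0:ℝ) ≤ Real.sqrt 2 := Real.sqrt_nonneg 2
    nlinarith [mul_le_mul_of_nonneg_left h1 hs]
end

section
/- (2D unicycles aligning with a common vector field) Let k > 0 and let θ_i, θ_j : [0,∞) → ℝ be differentiable heading angles whose difference satisfies (θ_j − θ_i)′(t) = −k·(θ_j(t) − θ_i(t)) for all t ≥ 0. Then θ_j(t) − θ_i(t) = (θ_j(0) − θ_i(0))·e^{−k t}, so the heading error converges globally to zero exponentially fast. Moreover, if |θ_j(0) − θ_i(0)| ≤ 2π and p_i, p_j : [0,∞) → ℝ² satisfy p_i′(t) = (cos θ_i(t), sin θ_i(t)) and p_j′(t) = (cos θ_j(t), sin θ_j(t)), then the relative position p_{ij} := p_i − p_j satisfies ‖p_{ij}(t) − p_{ij}(0)‖ ≤ 2π/k for all t ≥ 0. -/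
open Real

lemma vecnorm_le (a b : ℝ) :
    @Norm.norm (EuclideanSpace ℝ (Fin 2)) _
      ((WithLp.toLp 2 ![Real.cos a, Real.sin a] : EuclideanSpace ℝ (Fin 2)) -
       (WithLp.toLp 2 ![Real.cos b, Real.sin b] : EuclideanSpace ℝ (Fin 2))) ≤ |a - b| := by
  rw [EuclideanSpace.norm_eq, ← Real.sqrt_sq_eq_abs]
  apply Real.sqrt_le_sqrt
  rw [Fin.sum_univ_two]
  have h1 : Real.sin ((a - b) / 2) ^ 2 ≤ ((a - b) / 2) ^ 2 := Real.sin_sq_le_sq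
  have h2 : Real.cos (a - b) = 2 * Real.cos ((a - b) / 2) ^ 2 - 1 := by
    rw [← Real.cos_two_mul]; ring_nf
  have h3 : Real.sin ((a - b) / 2) ^ 2 + Real.cos ((a - b) / 2) ^ 2 = 1 :=
    Real.sin_sq_add_cos_sq _
  have h4 : Real.cos (a - b) = Real.cos a * Real.cos b + Real.sin a * Real.sin b :=
    Real.cos_sub a b
  have h5 : Real.sin a ^ 2 + Real.cos a ^ 2 = 1 := Real.sin_sq_add_cos_sq a
  have h6 : Real.sin b ^ 2 + Real.cos b ^ 2 = 1 := Real.sin_sq_add_cos_sq b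
  simp only [PiLp.sub_apply, PiLp.toLp_apply, Pi.sub_apply, Matrix.cons_val_zero, Matrix.cons_val_one,
    Matrix.head_cons, Real.norm_eq_abs, sq_abs]
  nlinarith [h1, h2, h3, h4, h5, h6]

/-- 2D unicycles aligning with a common vector field: if the heading difference
satisfies `(θ_j − θ_i)′ = −k (θ_j − θ_i)`, then it decays as
`(θ_j(0) − θ_i(0)) e^{−k t}`; moreover, if `|θ_j(0) − θ_i(0)| ≤ 2π` and the robots
move at unit speed along their headings, then
`‖p_{ij}(t) − p_{ij}(0)‖ ≤ 2π/k` for all `t ≥ 0`. -/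
theorem stmt18 (k : ℝ) (hk : 0 < k) (θi θj : ℝ → ℝ)
    (hθi : Differentiable ℝ θi) (hθj : Differentiable ℝ θj)
    (hode : ∀ t, 0 ≤ t →
      HasDerivAt (fun s => θj s - θi s) (-k * (θj t - θi t)) t) :
    (∀ t, 0 ≤ t → θj t - θi t = (θj 0 - θi 0) * Real.exp (-k * t)) ∧
    (|θj 0 - θi 0| ≤ 2 * Real.pi →
      ∀ pi pj : ℝ → EuclideanSpace ℝ (Fin 2),
        (∀ t, 0 ≤ t → HasDerivAt pi
          (WithLp.toLp 2 (![Real.cos (θi t), Real.sin (θi t)] : Fin 2 → ℝ) :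
            EuclideanSpace ℝ (Fin 2)) t) →
        (∀ t, 0 ≤ t → HasDerivAt pj
          (WithLp.toLp 2 (![Real.cos (θj t), Real.sin (θj t)] : Fin 2 → ℝ) :
            EuclideanSpace ℝ (Fin 2)) t) →
        ∀ t, 0 ≤ t →
          ‖(pi t - pj t) - (pi 0 - pj 0)‖ ≤ 2 * Real.pi / k) := by
  have part1 : ∀ t, 0 ≤ t → θj t - θi t = (θj 0 - θi 0) * Real.exp (-k * t) := by
    intro t ht
    set g : ℝ → ℝ := fun s => (θj s - θi s) * Real.exp (k * s) with hg
    have hgderiv : ∀ x, 0 ≤ x → HasDerivWithinAt g 0 (Set.Ici x) x := by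
      intro x hx
      have h1 : HasDerivAt (fun s => Real.exp (k * s)) (k * Real.exp (k * x)) x := by
        have := ((hasDerivAt_id x).const_mul k).exp
        simpa [mul_comm] using this
      have h2 := (hode x hx).mul h1
      have : HasDerivAt g 0 x := by
        have e : -k * (θj x - θi x) * Real.exp (k * x) + (θj x - θi x) * (k * Real.exp (k * x)) = 0 := by ring
        rw [e] at h2; exact h2
      exact this.hasDerivWithinAt
    have hcont : ContinuousOn g (Set.Icc 0 t) :=
      (((hθj.sub hθi).continuous).mul
        (Real.continuous_exp.comp (continuous_const.mul continuous_id))).continuousOn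
    have := constant_of_has_deriv_right_zero hcont
      (fun x hx => hgderiv x hx.1) t (Set.mem_Icc.mpr ⟨ht, le_refl t⟩)
    have hgt : (θj t - θi t) * Real.exp (k * t) = (θj 0 - θi 0) := by
      simpa [hg] using this
    have hek : Real.exp (k * t) ≠ 0 := Real.exp_ne_zero _
    rw [neg_mul, Real.exp_neg, ← hgt, mul_assoc, mul_inv_cancel₀ hek, mul_one]
  refine ⟨part1, ?_⟩
  intro hδ0 pi pj hpi hpj t ht
  set vi : ℝ → EuclideanSpace ℝ (Fin 2) := fun s =>
    (WithLp.toLp 2 (![Real.cos (θi s), Real.sin (θi s)] : Fin 2 → ℝ) : EuclideanSpace ℝ (Fin 2))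
  set vj : ℝ → EuclideanSpace ℝ (Fin 2) := fun s =>
    (WithLp.toLp 2 (![Real.cos (θj s), Real.sin (θj s)] : Fin 2 → ℝ) : EuclideanSpace ℝ (Fin 2))
  have hvicont : Continuous vi := by
    apply (PiLp.continuousLinearEquiv 2 ℝ (fun _ : Fin 2 => ℝ)).symm.continuous.comp
    refine continuous_pi fun i => ?_
    fin_cases i
    · simp; exact Real.continuous_cos.comp hθi.continuous
    · simp; exact Real.continuous_sin.comp hθi.continuous
  have hvjcont : Continuous vj := by
    apply (PiLp.continuousLinearEquiv 2 ℝ (fun _ : Fin 2 => ℝ)).symm.continuous.comp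
    refine continuous_pi fun i => ?_
    fin_cases i
    · simp; exact Real.continuous_cos.comp hθj.continuous
    · simp; exact Real.continuous_sin.comp hθj.continuous
  have hderiv : ∀ s ∈ Set.uIcc (0:ℝ) t, HasDerivAt (fun u => pi u - pj u) (vi s - vj s) s := by
    intro s hs
    rw [Set.uIcc_of_le ht] at hs
    exact (hpi s hs.1).sub (hpj s hs.1)
  have hint : IntervalIntegrable (fun s => vi s - vj s) MeasureTheory.volume 0 t :=
    (hvicont.sub hvjcont).intervalIntegrable 0 t
  have hftc : ∫ s in (0:ℝ)..t, (vi s - vj s) = (pi t - pj t) - (pi 0 - pj 0) :=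
    intervalIntegral.integral_eq_sub_of_hasDerivAt hderiv hint
  rw [← hftc]
  calc ‖∫ s in (0:ℝ)..t, (vi s - vj s)‖
      ≤ ∫ s in (0:ℝ)..t, ‖vi s - vj s‖ :=
        intervalIntegral.norm_integral_le_integral_norm ht
    _ ≤ ∫ s in (0:ℝ)..t, |θj 0 - θi 0| * Real.exp (-k * s) := by
        apply intervalIntegral.integral_mono_on ht
        · exact (hvicont.sub hvjcont).norm.intervalIntegrable 0 t
        · exact Continuous.intervalIntegrable
            (continuous_const.mul (Real.continuous_exp.comp (continuous_const.mul continuous_id))) 0 t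
        · intro s hs
          have hb := vecnorm_le (θi s) (θj s)
          refine hb.trans ?_
          have : θj s - θi s = (θj 0 - θi 0) * Real.exp (-k * s) := part1 s hs.1
          rw [abs_sub_comm, this, abs_mul, abs_of_pos (Real.exp_pos _)]
    _ = |θj 0 - θi 0| * ∫ s in (0:ℝ)..t, Real.exp (-k * s) := by
        rw [intervalIntegral.integral_const_mul]
    _ ≤ |θj 0 - θi 0| * (1 / k) := by
        apply mul_le_mul_of_nonneg_left _ (abs_nonneg _)
        have hfd : ∀ s ∈ Set.uIcc (0:ℝ) t,
            HasDerivAt (fun u => -(1/k) * Real.exp (-k * u)) (Real.exp (-k * s)) s := by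
          intro s _
          have h1 : HasDerivAt (fun u => Real.exp (-k * u)) (-k * Real.exp (-k * s)) s := by
            have := ((hasDerivAt_id s).const_mul (-k)).exp
            simpa [mul_comm] using this
          have := h1.const_mul (-(1/k))
          rw [← mul_assoc, neg_mul_neg, one_div, inv_mul_cancel₀ hk.ne', one_mul] at this
          simpa only [one_div] using this
        have hie : IntervalIntegrable (fun s => Real.exp (-k * s)) MeasureTheory.volume 0 t :=
          Continuous.intervalIntegrable
            (Real.continuous_exp.comp (continuous_const.mul continuous_id)) 0 t
        rw [intervalIntegral.integral_eq_sub_of_hasDerivAt hfd hie]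
        have h1 : (0:ℝ) < Real.exp (-k * t) := Real.exp_pos _
        have h2 : Real.exp (-k * 0) = 1 := by norm_num
        rw [h2]
        have hko : (0:ℝ) < 1 / k := one_div_pos.mpr hk
        nlinarith [mul_pos hko h1]
    _ ≤ 2 * Real.pi / k := by
        have : 2 * Real.pi / k = 2 * Real.pi * (1 / k) := by ring
        rw [this]
        exact mul_le_mul_of_nonneg_right hδ0 (by positivity)
end

section
/- (Geodesic distance on the unit sphere) Let γ : [a, b] → ℝ³ be a C¹ curve lying on the unit sphere, i.e. ‖γ(t)‖ = 1 for all t ∈ [a, b]. Then the length of γ is at least the spherical distance between its endpoints: ∫_a^b ‖γ′(t)‖ dt ≥ arccos( γ(a)ᵀ γ(b) ). -/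
open Real intervalIntegral

variable {E : Type*} [NormedAddCommGroup E] [InnerProductSpace ℝ E]

lemma arccos_antitone : Antitone Real.arccos := by
  intro x y h
  simp only [Real.arccos_eq_pi_div_two_sub_arcsin]
  have := Real.monotone_arcsin h
  linarith

/-- triangle inequality for spherical distance on unit vectors -/
lemma arccos_inner_triangle {x y z : E} (hx : ‖x‖ = 1) (hy : ‖y‖ = 1) (hz : ‖z‖ = 1) :
    Real.arccos (inner ℝ x z) ≤ Real.arccos (inner ℝ x y) + Real.arccos (inner ℝ y z) := by
  set p : ℝ := inner ℝ x y with hp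
  set q : ℝ := inner ℝ y z with hq
  set r : ℝ := inner ℝ x z with hr
  have hp1 : |p| ≤ 1 := by
    have := abs_real_inner_le_norm x y; rwa [hx, hy, one_mul] at this
  have hq1 : |q| ≤ 1 := by
    have := abs_real_inner_le_norm y z; rwa [hy, hz, one_mul] at this
  have hr1 : |r| ≤ 1 := by
    have := abs_real_inner_le_norm x z; rwa [hx, hz, one_mul] at this
  rw [abs_le] at hp1 hq1 hr1
  by_cases hpi : π ≤ Real.arccos p + Real.arccos q
  · exact le_trans (Real.arccos_le_pi r) hpi
  push_neg at hpi
  -- key inequality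
  have hxp : ‖x - p • y‖ = Real.sqrt (1 - p ^ 2) := by
    have h2 : ‖x - p • y‖ ^ 2 = 1 - p ^ 2 := by
      rw [@norm_sub_sq_real, real_inner_smul_right, norm_smul, hx, hy]
      simp [← hp]; ring
    rw [← h2, Real.sqrt_sq (norm_nonneg _)]
  have hzq : ‖z - q • y‖ = Real.sqrt (1 - q ^ 2) := by
    have h2 : ‖z - q • y‖ ^ 2 = 1 - q ^ 2 := by
      have hzy : (inner ℝ z y : ℝ) = q := (real_inner_comm y z).trans hq.symm
      rw [@norm_sub_sq_real, real_inner_smul_right, norm_smul, hz, hy, hzy]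
      simp; ring
    rw [← h2, Real.sqrt_sq (norm_nonneg _)]
  have hinner : (inner ℝ (x - p • y) (z - q • y) : ℝ) = r - p * q := by
    rw [inner_sub_left, inner_sub_right, inner_sub_right, real_inner_smul_left,
      real_inner_smul_left, real_inner_smul_right, real_inner_smul_right,
      real_inner_self_eq_norm_sq, hy]
    rw [← hp, ← hq, ← hr]
    ring
  have hkey : p * q - Real.sqrt (1 - p ^ 2) * Real.sqrt (1 - q ^ 2) ≤ r := by
    have := abs_real_inner_le_norm (x - p • y) (z - q • y)
    rw [hinner, hxp, hzq, abs_le] at this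
    linarith [this.1]
  have hcos : Real.cos (Real.arccos p + Real.arccos q) ≤ r := by
    rw [Real.cos_add, Real.cos_arccos hp1.1 hp1.2, Real.cos_arccos hq1.1 hq1.2,
      Real.sin_arccos, Real.sin_arccos]
    exact hkey
  calc Real.arccos r ≤ Real.arccos (Real.cos (Real.arccos p + Real.arccos q)) :=
        arccos_antitone hcos
    _ = Real.arccos p + Real.arccos q := Real.arccos_cos
        (add_nonneg (Real.arccos_nonneg _) (Real.arccos_nonneg _)) hpi.le

/-- chord-arc identity -/
lemma arccos_inner_eq {x y : E} (hx : ‖x‖ = 1) (hy : ‖y‖ = 1) :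
    Real.arccos (inner ℝ x y) = 2 * Real.arcsin (‖x - y‖ / 2) := by
  set s : ℝ := ‖x - y‖ / 2 with hs
  have hs0 : 0 ≤ s := by positivity
  have hchord : ‖x - y‖ ^ 2 = 2 - 2 * inner ℝ x y := by
    rw [@norm_sub_sq_real, hx, hy]; ring
  have hiv : (inner ℝ x y : ℝ) = 1 - 2 * s ^ 2 := by
    rw [hs]; nlinarith [hchord]
  have hs1 : s ≤ 1 := by
    have h1 : |(inner ℝ x y : ℝ)| ≤ 1 := by
      have := abs_real_inner_le_norm x y; rwa [hx, hy, one_mul] at this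
    rw [abs_le] at h1
    nlinarith [h1.1]
  have hrange : 0 ≤ 2 * Real.arcsin s ∧ 2 * Real.arcsin s ≤ π := by
    constructor
    · have := Real.arcsin_nonneg.2 hs0; linarith
    · have := Real.arcsin_le_pi_div_two s; linarith
  have hcos : Real.cos (2 * Real.arcsin s) = 1 - 2 * s ^ 2 := by
    rw [Real.cos_two_mul, Real.cos_arcsin, Real.sq_sqrt (by nlinarith : (0:ℝ) ≤ 1 - s ^ 2)]
    ring
  rw [hiv, ← hcos, Real.arccos_cos hrange.1 hrange.2]

/-- arcsin linear bound -/
lemma arcsin_le_div {s c : ℝ} (hs0 : 0 ≤ s) (hsc : s ≤ c) (hc1 : c < 1) :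
    Real.arcsin s ≤ s / Real.sqrt (1 - c ^ 2) := by
  have hc0 : 0 ≤ c := le_trans hs0 hsc
  have hpos : 0 < Real.sqrt (1 - c ^ 2) := Real.sqrt_pos.2 (by nlinarith)
  set C : ℝ := (Real.sqrt (1 - c ^ 2))⁻¹ with hC
  have hmvt := Convex.norm_image_sub_le_of_norm_hasDerivWithin_le
    (f := Real.arcsin) (f' := fun x => 1 / Real.sqrt (1 - x ^ 2)) (s := Set.Icc 0 c) (C := C)
    (fun x hx => (Real.hasDerivAt_arcsin
      (by intro h; rw [h] at hx; have := hx.1; linarith)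
      (by intro h; rw [h] at hx; have := hx.2; linarith)).hasDerivWithinAt)
    (fun x hx => by
      show ‖1 / Real.sqrt (1 - x ^ 2)‖ ≤ C
      rw [one_div, Real.norm_eq_abs, abs_inv, abs_of_nonneg (Real.sqrt_nonneg _)]
      rw [hC, inv_le_inv₀ (Real.sqrt_pos.2 (by nlinarith [hx.1, hx.2])) hpos]
      exact Real.sqrt_le_sqrt (by nlinarith [hx.1, hx.2]))
    (convex_Icc 0 c) (Set.left_mem_Icc.2 hc0) ⟨hs0, hsc⟩
  rw [Real.arcsin_zero, sub_zero, Real.norm_eq_abs, Real.norm_eq_abs, sub_zero,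
    abs_of_nonneg hs0, abs_of_nonneg (Real.arcsin_nonneg.2 hs0)] at hmvt
  rw [div_eq_inv_mul, ← hC]
  linarith [hmvt]

/-- iterated triangle inequality -/
lemma arccos_inner_sum (f : ℕ → E) (n : ℕ) (h : ∀ i ≤ n, ‖f i‖ = 1) :
    Real.arccos (inner ℝ (f 0) (f n)) ≤
      ∑ i ∈ Finset.range n, Real.arccos (inner ℝ (f i) (f (i + 1))) := by
  induction n with
  | zero =>
    simp only [Finset.range_zero, Finset.sum_empty]
    have : (inner ℝ (f 0) (f 0) : ℝ) = 1 := by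
      rw [real_inner_self_eq_norm_sq, h 0 le_rfl]; norm_num
    rw [this, Real.arccos_one]
  | succ n ih =>
    have h' : ∀ i ≤ n, ‖f i‖ = 1 := fun i hi => h i (hi.trans n.le_succ)
    calc Real.arccos (inner ℝ (f 0) (f (n + 1)))
        ≤ Real.arccos (inner ℝ (f 0) (f n)) + Real.arccos (inner ℝ (f n) (f (n + 1))) :=
          arccos_inner_triangle (h 0 (Nat.zero_le _)) (h n n.le_succ) (h (n + 1) le_rfl)
      _ ≤ (∑ i ∈ Finset.range n, Real.arccos (inner ℝ (f i) (f (i + 1)))) +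
            Real.arccos (inner ℝ (f n) (f (n + 1))) := by
          linarith [ih h']
      _ = _ := (Finset.sum_range_succ _ n).symm

/-- Geodesic distance on the unit sphere: a C¹ curve `γ : [a,b] → ℝ³` lying on the
unit sphere has length at least the spherical distance between its endpoints:
`∫_a^b ‖γ′(t)‖ dt ≥ arccos(γ(a)ᵀ γ(b))`. -/
theorem stmt19 (a b : ℝ) (hab : a ≤ b)
    (γ γ' : ℝ → EuclideanSpace ℝ (Fin 3))
    (hsphere : ∀ t ∈ Set.Icc a b, ‖γ t‖ = 1)
    (hderiv : ∀ t ∈ Set.Icc a b, HasDerivWithinAt γ (γ' t) (Set.Icc a b) t)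
    (hcont : ContinuousOn γ' (Set.Icc a b)) :
    Real.arccos (inner ℝ (γ a) (γ b)) ≤ ∫ t in a..b, ‖γ' t‖ := by
  have hγc : ContinuousOn γ (Set.Icc a b) := fun t ht => (hderiv t ht).continuousWithinAt
  have hnc : ContinuousOn (fun t => ‖γ' t‖) (Set.Icc a b) := hcont.norm
  obtain ⟨M, hM⟩ := isCompact_Icc.exists_bound_of_continuousOn hcont
  have hM0 : 0 ≤ M := le_trans (norm_nonneg _) (hM a ⟨le_refl a, hab⟩)
  set L := ∫ t in a..b, ‖γ' t‖ with hLdef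
  have hInt : ∀ u v : ℝ, u ∈ Set.Icc a b → v ∈ Set.Icc a b →
      IntervalIntegrable (fun t => ‖γ' t‖) MeasureTheory.volume u v := fun u v hu hv =>
    (hnc.mono (Set.uIcc_subset_Icc hu hv)).intervalIntegrable
  -- chord bound via FTC
  have hchord : ∀ u v : ℝ, u ∈ Set.Icc a b → v ∈ Set.Icc a b → u ≤ v →
      ‖γ v - γ u‖ ≤ ∫ t in u..v, ‖γ' t‖ := by
    intro u v hu hv huv
    have hIcc : Set.Icc u v ⊆ Set.Icc a b := Set.Icc_subset_Icc hu.1 hv.2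
    have hftc : ∫ t in u..v, γ' t = γ v - γ u := by
      apply intervalIntegral.integral_eq_sub_of_hasDerivAt_of_le huv (hγc.mono hIcc)
      · intro x hx
        have hx' : x ∈ Set.Icc a b := ⟨hu.1.trans hx.1.le, hx.2.le.trans hv.2⟩
        exact (hderiv x hx').hasDerivAt (Icc_mem_nhds (lt_of_le_of_lt hu.1 hx.1)
          (lt_of_lt_of_le hx.2 hv.2))
      · exact (hcont.mono (Set.uIcc_subset_Icc hu hv)).intervalIntegrable
    calc ‖γ v - γ u‖ = ‖∫ t in u..v, γ' t‖ := by rw [hftc]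
      _ ≤ ∫ t in u..v, ‖γ' t‖ := intervalIntegral.norm_integral_le_integral_norm huv
  -- subinterval integral bound
  have hIbound : ∀ u v : ℝ, u ∈ Set.Icc a b → v ∈ Set.Icc a b → u ≤ v →
      (∫ t in u..v, ‖γ' t‖) ≤ M * (v - u) := by
    intro u v hu hv huv
    calc (∫ t in u..v, ‖γ' t‖) ≤ ‖∫ t in u..v, ‖γ' t‖‖ := le_abs_self _
      _ ≤ M * |v - u| := by
        apply intervalIntegral.norm_integral_le_of_norm_le_const
        intro x hx
        rw [Set.uIoc_of_le huv] at hx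
        rw [Real.norm_eq_abs, abs_of_nonneg (norm_nonneg _)]
        exact hM x ⟨hu.1.trans hx.1.le, hx.2.trans hv.2⟩
      _ = M * (v - u) := by rw [abs_of_nonneg (by linarith)]
  have hL0 : 0 ≤ L := intervalIntegral.integral_nonneg hab (fun t _ => norm_nonneg _)
  -- key estimate for every small ε
  have key : ∀ ε : ℝ, 0 < ε → ε < 1 →
      Real.arccos (inner ℝ (γ a) (γ b)) * Real.sqrt (1 - ε ^ 2) ≤ L := by
    intro ε hε0 hε1
    have hsq : 0 < Real.sqrt (1 - ε ^ 2) := Real.sqrt_pos.2 (by nlinarith)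
    obtain ⟨n, hn⟩ := exists_nat_ge (M * (b - a) / ε)
    set m : ℕ := n + 1 with hm
    have hm0 : (0:ℝ) < m := by positivity
    have hMb : M * (b - a) ≤ ε * m := by
      rw [div_le_iff₀ hε0] at hn
      calc M * (b - a) ≤ ε * n := by linarith
        _ ≤ ε * m := by
          apply mul_le_mul_of_nonneg_left _ hε0.le
          exact_mod_cast Nat.le_succ n
    set δ : ℝ := (b - a) / m with hδ
    have hδ0 : 0 ≤ δ := div_nonneg (by linarith) hm0.le
    set t : ℕ → ℝ := fun i => a + i * δ with ht
    have ht0 : t 0 = a := by simp [ht]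
    have htm : t m = b := by
      simp only [ht, hδ]
      field_simp
      ring
    have htmono : ∀ i j : ℕ, i ≤ j → t i ≤ t j := by
      intro i j hij
      simp only [ht]
      have : (i:ℝ) ≤ j := by exact_mod_cast hij
      nlinarith
    have htmem : ∀ i : ℕ, i ≤ m → t i ∈ Set.Icc a b := by
      intro i hi
      constructor
      · rw [← ht0]; exact htmono 0 i (Nat.zero_le _)
      · rw [← htm]; exact htmono i m hi
    have htstep : ∀ i : ℕ, t (i + 1) - t i = δ := by
      intro i; simp only [ht]; push_cast; ring
    have hunit : ∀ i ≤ m, ‖γ (t i)‖ = 1 := fun i hi => hsphere _ (htmem i hi)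
    -- per-segment estimates
    have hseg : ∀ i : ℕ, i < m →
        Real.arccos (inner ℝ (γ (t i)) (γ (t (i + 1)))) ≤
          (∫ s in (t i)..(t (i + 1)), ‖γ' s‖) / Real.sqrt (1 - ε ^ 2) := by
      intro i hi
      have hi1 : i + 1 ≤ m := hi
      have hii : i ≤ m := Nat.le_of_lt hi
      have hmem1 := htmem i hii
      have hmem2 := htmem (i + 1) hi1
      have hle : t i ≤ t (i + 1) := htmono i (i + 1) (Nat.le_succ i)
      set c : ℝ := ‖γ (t (i + 1)) - γ (t i)‖ with hc
      have hcI : c ≤ ∫ s in (t i)..(t (i + 1)), ‖γ' s‖ := hchord _ _ hmem1 hmem2 hle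
      have hcε : c ≤ ε := by
        calc c ≤ ∫ s in (t i)..(t (i + 1)), ‖γ' s‖ := hcI
          _ ≤ M * (t (i + 1) - t i) := hIbound _ _ hmem1 hmem2 hle
          _ = M * δ := by rw [htstep]
          _ ≤ ε := by
            rw [hδ, ← mul_div_assoc, div_le_iff₀ hm0]
            linarith
      have heq : Real.arccos (inner ℝ (γ (t i)) (γ (t (i + 1)))) = 2 * Real.arcsin (c / 2) := by
        rw [arccos_inner_eq (hunit i hii) (hunit (i + 1) hi1), hc, norm_sub_rev]
      rw [heq]
      have harc : Real.arcsin (c / 2) ≤ (c / 2) / Real.sqrt (1 - ε ^ 2) :=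
        arcsin_le_div (by positivity) (by linarith) hε1
      calc 2 * Real.arcsin (c / 2) ≤ 2 * ((c / 2) / Real.sqrt (1 - ε ^ 2)) := by linarith
        _ = c / Real.sqrt (1 - ε ^ 2) := by ring
        _ ≤ (∫ s in (t i)..(t (i + 1)), ‖γ' s‖) / Real.sqrt (1 - ε ^ 2) := by gcongr
    have hIntAdj : ∀ i < m, IntervalIntegrable (fun s => ‖γ' s‖)
        MeasureTheory.volume (t i) (t (i + 1)) :=
      fun i hi => hInt _ _ (htmem i hi.le) (htmem (i + 1) hi)
    have hsum := intervalIntegral.sum_integral_adjacent_intervals hIntAdj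
    rw [ht0, htm] at hsum
    have hmain := arccos_inner_sum (fun i => γ (t i)) m hunit
    simp only [ht0, htm] at hmain
    have hsum2 : ∑ i ∈ Finset.range m, Real.arccos (inner ℝ (γ (t i)) (γ (t (i + 1)))) ≤
        ∑ i ∈ Finset.range m,
          (∫ s in (t i)..(t (i + 1)), ‖γ' s‖) / Real.sqrt (1 - ε ^ 2) :=
      Finset.sum_le_sum (fun i hi => hseg i (Finset.mem_range.1 hi))
    rw [← Finset.sum_div, hsum] at hsum2
    have hfin : Real.arccos (inner ℝ (γ a) (γ b)) ≤ L / Real.sqrt (1 - ε ^ 2) :=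
      le_trans hmain hsum2
    rw [← le_div_iff₀ hsq]
    exact hfin
  -- limit as ε → 0
  have htend : Filter.Tendsto
      (fun ε : ℝ => Real.arccos (inner ℝ (γ a) (γ b)) * Real.sqrt (1 - ε ^ 2))
      (nhdsWithin 0 (Set.Ioi 0)) (nhds (Real.arccos (inner ℝ (γ a) (γ b)))) := by
    have hcont' : Continuous (fun ε : ℝ =>
        Real.arccos (inner ℝ (γ a) (γ b)) * Real.sqrt (1 - ε ^ 2)) := by
      fun_prop
    have := hcont'.tendsto 0
    simp only [Real.sqrt_one, mul_one, ne_eq, OfNat.ofNat_ne_zero, not_false_eq_true,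
      zero_pow, sub_zero] at this
    exact this.mono_left nhdsWithin_le_nhds
  apply le_of_tendsto htend
  filter_upwards [Ioo_mem_nhdsGT_of_mem (Set.left_mem_Ico.2 zero_lt_one)] with ε hε
  exact key ε hε.1 hε.2
end
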